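/- arXiv:1101.5696 — 6 statements merged into one kernel-verified Lean document; each statement's English description precedes it below -/
import Mathlib

section
/- For every n ∈ ℤ one has the identity (id − λ⁻¹σ)(x₀)(n) = (λ − 1) ∑_{j=1}^∞ λ^{−j} τ^j(x₀)(n), where the series on the right converges absolutely. -/
set_option maxHeartbeats 800000


open scoped ENNReal
open Filter Topology

noncomputable section

/-- `b(n)` = number of ones in the binary expansion of `n ≥ 0`. -/
def binOnes (n : ℤ) : ℕ := (Nat.digits 2 n.toNat).sum

/-- the element `x₀`: `x₀(n) = λ^{-b(n)}` for `n ≥ 0` and `x₀(n) = 0` for `n < 0`. -/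
def x0Fun (lam : ℂ) : ℤ → ℂ := fun n => if 0 ≤ n then lam⁻¹ ^ binOnes n else 0

/-- the operator `τ` on sequences: `τ(x)(n) = x(n/2)` for even `n`, `0` for odd `n`. -/
def tauFun (x : ℤ → ℂ) : ℤ → ℂ := fun n => if (2 : ℤ) ∣ n then x (n / 2) else 0

lemma bones_even (k : ℕ) : (Nat.digits 2 (2 * k)).sum = (Nat.digits 2 k).sum := by
  rcases Nat.eq_zero_or_pos k with hk | hk
  · simp [hk]
  · rw [Nat.digits_def' (by norm_num : (1:ℕ) < 2) (by positivity)]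
    simp [Nat.mul_div_cancel_left, Nat.mul_mod_right]

lemma bones_odd (k : ℕ) : (Nat.digits 2 (2 * k + 1)).sum = (Nat.digits 2 k).sum + 1 := by
  rw [Nat.digits_def' (by norm_num : (1:ℕ) < 2) (by positivity)]
  have h1 : (2 * k + 1) % 2 = 1 := by omega
  have h2 : (2 * k + 1) / 2 = k := by omega
  rw [h1, h2]
  simp [Nat.add_comm]

lemma x0_nat (lam : ℂ) (m : ℕ) : x0Fun lam (m : ℤ) = lam⁻¹ ^ (Nat.digits 2 m).sum := by
  simp [x0Fun, binOnes]

lemma tau_iter_neg (lam : ℂ) (j : ℕ) (n : ℤ) (hn : n < 0) :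
    tauFun^[j] (x0Fun lam) n = 0 := by
  induction j generalizing n with
  | zero => simp [x0Fun, not_le.mpr hn]
  | succ j ih =>
    rw [Function.iterate_succ_apply']
    unfold tauFun
    split_ifs with hd
    · exact ih _ (Int.ediv_neg_of_neg_of_pos hn (by norm_num))
    · rfl

lemma tau_norm_le (x : ℤ → ℂ) (hx : ∀ m, ‖x m‖ ≤ 1) (j : ℕ) (m : ℤ) :
    ‖tauFun^[j] x m‖ ≤ 1 := by
  induction j generalizing m with
  | zero => exact hx m
  | succ j ih =>
    rw [Function.iterate_succ_apply']
    unfold tauFun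
    split_ifs with hd
    · exact ih _
    · simp

lemma x0_norm_le (lam : ℂ) (h : 1 < ‖lam‖) (m : ℤ) : ‖x0Fun lam m‖ ≤ 1 := by
  unfold x0Fun
  split_ifs with hm
  · rw [norm_pow]
    apply pow_le_one₀ (norm_nonneg _)
    rw [norm_inv]
    exact inv_le_one_of_one_le₀ h.le
  · simp

lemma summB (lam : ℂ) (h : 1 < ‖lam‖) (n : ℤ) :
    Summable (fun j : ℕ => ‖lam⁻¹ ^ j * tauFun^[j] (x0Fun lam) n‖) := by
  have hr : ‖(lam⁻¹ : ℂ)‖ < 1 := by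
    rw [norm_inv]
    exact inv_lt_one_of_one_lt₀ h
  apply Summable.of_nonneg_of_le (fun j => norm_nonneg _) (fun j => ?_)
    (summable_geometric_of_lt_one (norm_nonneg _) hr)
  rw [norm_mul, norm_pow]
  calc ‖lam⁻¹‖ ^ j * ‖tauFun^[j] (x0Fun lam) n‖
      ≤ ‖lam⁻¹‖ ^ j * 1 := by
        apply mul_le_mul_of_nonneg_left
          (tau_norm_le _ (x0_norm_le lam h) j n) (by positivity)
    _ = ‖lam⁻¹‖ ^ j := mul_one _

lemma summA (lam : ℂ) (h : 1 < ‖lam‖) (n : ℤ) :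
    Summable (fun j : ℕ => ‖lam⁻¹ ^ (j + 1) * (tauFun^[j + 1] (x0Fun lam)) n‖) :=
  (summB lam h n).comp_injective (add_left_injective 1)

lemma S_rec (lam : ℂ) (h : 1 < ‖lam‖) (n : ℤ) :
    ∑' j : ℕ, lam⁻¹ ^ (j + 1) * (tauFun^[j + 1] (x0Fun lam)) (2 * n)
      = lam⁻¹ * x0Fun lam n
        + lam⁻¹ * ∑' j : ℕ, lam⁻¹ ^ (j + 1) * (tauFun^[j + 1] (x0Fun lam)) n := by
  have hterm : ∀ j : ℕ, (tauFun^[j + 1] (x0Fun lam)) (2 * n)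
      = (tauFun^[j] (x0Fun lam)) n := by
    intro j
    rw [Function.iterate_succ_apply']
    unfold tauFun
    rw [if_pos ⟨n, rfl⟩, Int.mul_ediv_cancel_left _ (by norm_num)]
  have hsum : Summable (fun j : ℕ => lam⁻¹ ^ (j + 1) * (tauFun^[j] (x0Fun lam)) n) := by
    apply Summable.congr (((summB lam h n).of_norm).mul_left lam⁻¹)
    intro j
    rw [pow_succ]
    ring
  calc ∑' j : ℕ, lam⁻¹ ^ (j + 1) * (tauFun^[j + 1] (x0Fun lam)) (2 * n)
      = ∑' j : ℕ, lam⁻¹ ^ (j + 1) * (tauFun^[j] (x0Fun lam)) n := by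
        exact tsum_congr fun j => by rw [hterm j]
    _ = lam⁻¹ ^ (0 + 1) * (tauFun^[0] (x0Fun lam)) n
        + ∑' j : ℕ, lam⁻¹ ^ (j + 1 + 1) * (tauFun^[j + 1] (x0Fun lam)) n :=
        Summable.tsum_eq_zero_add hsum
    _ = lam⁻¹ * x0Fun lam n
        + lam⁻¹ * ∑' j : ℕ, lam⁻¹ ^ (j + 1) * (tauFun^[j + 1] (x0Fun lam)) n := by
        rw [← tsum_mul_left]
        congr 1
        · simp
        · exact tsum_congr fun j => by rw [pow_succ]; ring

lemma main_nat (lam : ℂ) (h : 1 < ‖lam‖) (m : ℕ) :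
    x0Fun lam (m : ℤ) - lam⁻¹ * x0Fun lam ((m : ℤ) - 1) =
      (lam - 1) * ∑' j : ℕ, lam⁻¹ ^ (j + 1) * (tauFun^[j + 1] (x0Fun lam)) (m : ℤ) := by
  have hlam : lam ≠ 0 := by
    intro h0; rw [h0] at h; simp at h; linarith
  have hinv : lam * lam⁻¹ = 1 := mul_inv_cancel₀ hlam
  induction m using Nat.strong_induction_on with
  | _ m ih =>
    rcases Nat.even_or_odd m with ⟨k, hk⟩ | ⟨k, hk⟩
    · -- m = 2k
      have hm : m = 2 * k := by omega
      subst hm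
      rcases Nat.eq_zero_or_pos k with hk0 | hk0
      · -- m = 0
        subst hk0
        have E := S_rec lam h 0
        rw [mul_zero] at E
        set S0 := ∑' j : ℕ, lam⁻¹ ^ (j + 1) * (tauFun^[j + 1] (x0Fun lam)) (0 : ℤ) with hS0
        have hx0 : x0Fun lam (0 : ℤ) = 1 := by simp [x0Fun, binOnes]
        have hxm1 : x0Fun lam ((0:ℤ) - 1) = 0 := by
          simp only [x0Fun]
          norm_num
        push_cast
        rw [hx0, show ((-1 : ℤ)) = (0:ℤ) - 1 by ring, hxm1]
        rw [hx0] at E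
        linear_combination (-lam) * E - (1 + S0) * hinv
      · -- m = 2k, k ≥ 1
        have hcast : ((2 * k : ℕ) : ℤ) = 2 * (k : ℤ) := by push_cast; ring
        have hihk := ih k (by omega)
        have E := S_rec lam h (k : ℤ)
        rw [hcast, E]
        -- compute x0 values
        have h1 : x0Fun lam ((2 * k : ℕ) : ℤ) = lam⁻¹ ^ (Nat.digits 2 k).sum := by
          rw [x0_nat, bones_even]
        have h2 : ((2 * k : ℕ) : ℤ) - 1 = ((2 * (k - 1) + 1 : ℕ) : ℤ) := by
          push_cast; omega
        have h3 : x0Fun lam (((2 * k : ℕ) : ℤ) - 1)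
            = lam⁻¹ * lam⁻¹ ^ (Nat.digits 2 (k - 1)).sum := by
          rw [h2, x0_nat, bones_odd, pow_succ]; ring
        have h4 : x0Fun lam (k : ℤ) = lam⁻¹ ^ (Nat.digits 2 k).sum := x0_nat lam k
        have h5 : ((k : ℕ) : ℤ) - 1 = ((k - 1 : ℕ) : ℤ) := by push_cast; omega
        have h6 : x0Fun lam ((k : ℤ) - 1) = lam⁻¹ ^ (Nat.digits 2 (k - 1)).sum := by
          rw [h5, x0_nat]
        rw [hcast] at h1 h3
        rw [h1, h3]
        rw [h4, h6] at hihk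
        rw [h4]
        set S := ∑' j : ℕ, lam⁻¹ ^ (j + 1) * (tauFun^[j + 1] (x0Fun lam)) (k : ℤ)
        set A := lam⁻¹ ^ (Nat.digits 2 k).sum
        set B := lam⁻¹ ^ (Nat.digits 2 (k - 1)).sum
        linear_combination lam⁻¹ * hihk - A * hinv
    · -- m = 2k + 1
      have hm : m = 2 * k + 1 := by omega
      subst hm
      have hterm : ∀ j : ℕ, (tauFun^[j + 1] (x0Fun lam)) ((2 * k + 1 : ℕ) : ℤ) = 0 := by
        intro j
        rw [Function.iterate_succ_apply']
        unfold tauFun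
        rw [if_neg]
        intro hd
        omega
      have hS : ∑' j : ℕ, lam⁻¹ ^ (j + 1) * (tauFun^[j + 1] (x0Fun lam)) ((2 * k + 1 : ℕ) : ℤ)
          = 0 := by
        have : ∀ j : ℕ, lam⁻¹ ^ (j + 1) * (tauFun^[j + 1] (x0Fun lam)) ((2 * k + 1 : ℕ) : ℤ)
            = 0 := fun j => by rw [hterm j, mul_zero]
        rw [tsum_congr this, tsum_zero]
      rw [hS, mul_zero]
      have h1 : x0Fun lam ((2 * k + 1 : ℕ) : ℤ)
          = lam⁻¹ * lam⁻¹ ^ (Nat.digits 2 k).sum := by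
        rw [x0_nat, bones_odd, pow_succ]; ring
      have h2 : ((2 * k + 1 : ℕ) : ℤ) - 1 = ((2 * k : ℕ) : ℤ) := by push_cast; ring
      have h3 : x0Fun lam (((2 * k + 1 : ℕ) : ℤ) - 1) = lam⁻¹ ^ (Nat.digits 2 k).sum := by
        rw [h2, x0_nat, bones_even]
      rw [h1, h3]
      ring

/-- For every `n ∈ ℤ`,
`(id − λ⁻¹σ)(x₀)(n) = (λ − 1) ∑_{j=1}^∞ λ^{−j} τ^j(x₀)(n)`, the series converging absolutely
(here the sum over `j ≥ 1` is indexed by `j + 1` for `j : ℕ`). -/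
theorem statement_3 (lam : ℂ) (h : 1 < ‖lam‖) (n : ℤ) :
    Summable (fun j : ℕ => ‖lam⁻¹ ^ (j + 1) * (tauFun^[j + 1] (x0Fun lam)) n‖) ∧
    x0Fun lam n - lam⁻¹ * x0Fun lam (n - 1) =
      (lam - 1) * ∑' j : ℕ, lam⁻¹ ^ (j + 1) * (tauFun^[j + 1] (x0Fun lam)) n := by
  refine ⟨summA lam h n, ?_⟩
  rcases le_or_gt 0 n with hn | hn
  · obtain ⟨m, rfl⟩ : ∃ m : ℕ, n = (m : ℤ) := ⟨n.toNat, (Int.toNat_of_nonneg hn).symm⟩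
    exact main_nat lam h m
  · have h0 : x0Fun lam n = 0 := by simp [x0Fun, not_le.mpr hn]
    have h1 : x0Fun lam (n - 1) = 0 := by
      simp only [x0Fun]; rw [if_neg]; omega
    have hS : ∑' j : ℕ, lam⁻¹ ^ (j + 1) * (tauFun^[j + 1] (x0Fun lam)) n = 0 := by
      have : ∀ j : ℕ, lam⁻¹ ^ (j + 1) * (tauFun^[j + 1] (x0Fun lam)) n = 0 :=
        fun j => by rw [tau_iter_neg lam (j + 1) n hn, mul_zero]
      rw [tsum_congr this, tsum_zero]
    rw [h0, h1, hS]
    ring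
end
end

section
/- For every k ≥ 1, the element τ^k(x₀) belongs to F^{(λ)}. In particular, τ(x₀) = ∑_{j=0}^∞ λ^{−2j} σ^{2j}((id − λ⁻¹σ)(x₀)), the series converging in norm in ℓ∞(ℤ). -/
open scoped ENNReal
open Filter Topology

noncomputable section

/-- `ℓ₁(ℤ)`, the complex Banach space of absolutely summable bilateral sequences. -/
abbrev ellOne : Type := lp (fun _ : ℤ => ℂ) 1

/-- `ℓ∞(ℤ)`, the complex Banach space of bounded bilateral sequences. -/
abbrev ellInf : Type := lp (fun _ : ℤ => ℂ) ∞

lemma memℓp_zshift (m : ℤ) (x : ellInf) : Memℓp (fun n : ℤ => x (n - m)) ∞ := by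
  have hx := memℓp_infty_iff.1 (lp.memℓp x)
  refine memℓp_infty (hx.mono ?_)
  rintro r ⟨n, rfl⟩
  exact ⟨n - m, rfl⟩

/-- translation by `m` on `ℓ∞(ℤ)`: `(zshift m x) n = x (n - m)`.  In particular `zshift 1` is
the bilateral shift `σ`, with `σ(x)(n) = x (n - 1)`, and `zshift m = σ^m`. -/
def zshift (m : ℤ) (x : ellInf) : ellInf := ⟨fun n => x (n - m), memℓp_zshift m x⟩

lemma x0_mem (lam : ℂ) (h : 1 < ‖lam‖) : Memℓp (x0Fun lam) ∞ := by
  refine memℓp_infty ⟨1, ?_⟩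
  rintro r ⟨n, rfl⟩
  simp only [x0Fun]
  split_ifs
  · rw [norm_pow]
    refine pow_le_one₀ (norm_nonneg _) ?_
    rw [norm_inv]
    exact inv_le_one_of_one_le₀ h.le
  · simp

/-- `x₀` as an element of `ℓ∞(ℤ)`. -/
def x0L (lam : ℂ) (h : 1 < ‖lam‖) : ellInf := ⟨x0Fun lam, x0_mem lam h⟩

/-- `F^{(λ)}`: the closed linear span in `ℓ∞(ℤ)` of the bilateral shifts `σ^m(x₀)`, `m ∈ ℤ`. -/
def Flam (lam : ℂ) (h : 1 < ‖lam‖) : Submodule ℂ ellInf :=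
  (Submodule.span ℂ (Set.range fun m : ℤ => zshift m (x0L lam h))).topologicalClosure

lemma memℓp_tau (x : ellInf) : Memℓp (tauFun (⇑x)) ∞ := by
  have hx := memℓp_infty_iff.1 (lp.memℓp x)
  refine memℓp_infty ((hx.insert 0).mono ?_)
  rintro r ⟨n, rfl⟩
  simp only [tauFun]
  split_ifs
  · exact Set.mem_insert_of_mem _ ⟨n / 2, rfl⟩
  · simp

/-- the operator `τ : ℓ∞(ℤ) → ℓ∞(ℤ)`. -/
def tauL (x : ellInf) : ellInf := ⟨tauFun (⇑x), memℓp_tau x⟩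

/-! ### Auxiliary lemmas -/

lemma zshift_apply (m : ℤ) (x : ellInf) (n : ℤ) : zshift m x n = x (n - m) := rfl

lemma lp_ext' {f g : ellInf} (h : ∀ n, f n = g n) : f = g := lp.ext (funext h)

lemma zshift_zshift (a b : ℤ) (x : ellInf) :
    zshift a (zshift b x) = zshift (a + b) x := by
  refine lp_ext' fun n => ?_
  have harg : n - a - b = n - (a + b) := by ring
  simp only [zshift_apply, harg]

lemma tauL_apply (x : ellInf) (n : ℤ) :
    tauL x n = if (2 : ℤ) ∣ n then x (n / 2) else 0 := rfl

/-- translation as a continuous linear map. -/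
def zshiftCLM (m : ℤ) : ellInf →L[ℂ] ellInf :=
  LinearMap.mkContinuous
    { toFun := zshift m
      map_add' := fun x y => by
        refine lp_ext' fun n => ?_
        simp only [zshift_apply, lp.coeFn_add, Pi.add_apply]
      map_smul' := fun c x => by
        refine lp_ext' fun n => ?_
        simp only [zshift_apply, lp.coeFn_smul, Pi.smul_apply, RingHom.id_apply] }
    1 (fun x => by
      rw [one_mul]
      refine lp.norm_le_of_forall_le (norm_nonneg x) fun n => ?_
      exact lp.norm_apply_le_norm ENNReal.top_ne_zero x (n - m))

lemma zshiftCLM_apply (m : ℤ) (x : ellInf) : zshiftCLM m x = zshift m x := rfl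

/-- `τ` as a continuous linear map. -/
def tauCLM : ellInf →L[ℂ] ellInf :=
  LinearMap.mkContinuous
    { toFun := tauL
      map_add' := fun x y => by
        refine lp_ext' fun n => ?_
        simp only [tauL_apply, lp.coeFn_add, Pi.add_apply]
        split_ifs <;> simp
      map_smul' := fun c x => by
        refine lp_ext' fun n => ?_
        simp only [tauL_apply, lp.coeFn_smul, Pi.smul_apply, RingHom.id_apply, smul_eq_mul]
        split_ifs <;> simp }
    1 (fun x => by
      rw [one_mul]
      refine lp.norm_le_of_forall_le (norm_nonneg x) fun n => ?_
      show ‖tauL x n‖ ≤ ‖x‖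
      rw [tauL_apply]
      split_ifs
      · exact lp.norm_apply_le_norm ENNReal.top_ne_zero x (n / 2)
      · simp only [norm_zero]
        exact norm_nonneg x)

lemma tauCLM_apply (x : ellInf) : tauCLM x = tauL x := rfl

lemma tauL_zshift (m : ℤ) (x : ellInf) :
    tauL (zshift m x) = zshift (2 * m) (tauL x) := by
  refine lp_ext' fun n => ?_
  simp only [tauL_apply, zshift_apply]
  have hiff : (2 : ℤ) ∣ n ↔ (2 : ℤ) ∣ (n - 2 * m) := by
    constructor
    · rintro ⟨q, rfl⟩; exact ⟨q - m, by ring⟩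
    · rintro ⟨q, hq⟩; exact ⟨q + m, by omega⟩
  split_ifs with h1 h2 h2
  · have harg : n / 2 - m = (n - 2 * m) / 2 := by omega
    rw [harg]
  · exact absurd (hiff.1 h1) h2
  · exact absurd (hiff.2 h2) h1
  · rfl

/-- evaluation at a coordinate as a continuous linear map on `ℓ∞(ℤ)`. -/
def evalCLM (n : ℤ) : ellInf →L[ℂ] ℂ :=
  LinearMap.mkContinuous
    { toFun := fun x => x n
      map_add' := fun x y => by simp only [lp.coeFn_add, Pi.add_apply]
      map_smul' := fun c x => by simp only [lp.coeFn_smul, Pi.smul_apply, RingHom.id_apply] }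
    1 (fun x => by
      rw [one_mul]
      exact lp.norm_apply_le_norm ENNReal.top_ne_zero x n)

lemma evalCLM_apply (n : ℤ) (x : ellInf) : evalCLM n x = x n := rfl

/-! ### Digit sums -/

lemma bs_two_mul (m : ℕ) : (Nat.digits 2 (2 * m)).sum = (Nat.digits 2 m).sum := by
  rcases Nat.eq_zero_or_pos m with rfl | hm
  · simp
  · rw [Nat.digits_def' (by norm_num : 1 < 2) (by omega)]
    have h1 : 2 * m % 2 = 0 := by omega
    have h2 : 2 * m / 2 = m := by omega
    rw [h1, h2, List.sum_cons, zero_add]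

lemma bs_two_mul_add_one (m : ℕ) :
    (Nat.digits 2 (2 * m + 1)).sum = (Nat.digits 2 m).sum + 1 := by
  rw [Nat.digits_def' (by norm_num : 1 < 2) (by omega)]
  have h1 : (2 * m + 1) % 2 = 1 := by omega
  have h2 : (2 * m + 1) / 2 = m := by omega
  rw [h1, h2, List.sum_cons]
  omega

lemma x0Fun_natCast (lam : ℂ) (N : ℕ) :
    x0Fun lam (N : ℤ) = lam⁻¹ ^ (Nat.digits 2 N).sum := by
  simp [x0Fun, binOnes]

lemma x0Fun_neg (lam : ℂ) {k : ℤ} (hk : k < 0) : x0Fun lam k = 0 := by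
  simp [x0Fun, not_le.2 hk]

/-! ### The key finite identity, at the level of `ℕ` -/

/-- `X N = λ^{-b(N)}` and `T N = (τ x₀)(N)` for `N : ℕ`. -/
private def Xb (lam : ℂ) (N : ℕ) : ℂ := lam⁻¹ ^ (Nat.digits 2 N).sum

private def Tb (lam : ℂ) (N : ℕ) : ℂ := if 2 ∣ N then Xb lam (N / 2) else 0

lemma key_nat (lam : ℂ) (N : ℕ) :
    ∑ i ∈ Finset.range (N + 1), ((-1 : ℂ) ^ i * lam⁻¹ ^ i * Xb lam (N - i))
      = Tb lam N := by
  induction N with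
  | zero => simp [Xb, Tb]
  | succ N ih =>
      rw [Finset.sum_range_succ']
      have hcongr : ∀ i ∈ Finset.range (N + 1),
          (-1 : ℂ) ^ (i + 1) * lam⁻¹ ^ (i + 1) * Xb lam (N + 1 - (i + 1))
            = (-lam⁻¹) * ((-1 : ℂ) ^ i * lam⁻¹ ^ i * Xb lam (N - i)) := by
        intro i _
        have harg : N + 1 - (i + 1) = N - i := by omega
        rw [harg]
        ring
      rw [Finset.sum_congr rfl hcongr, ← Finset.mul_sum, ih]
      simp only [pow_zero, one_mul, Nat.sub_zero]
      rcases Nat.even_or_odd N with ⟨m, hm⟩ | ⟨m, hm⟩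
      · -- N = 2m even, N+1 odd
        have hm' : N = 2 * m := by omega
        subst hm'
        have hT : Tb lam (2 * m) = Xb lam m := by
          simp only [Tb, if_pos (Dvd.intro m rfl)]
          congr 1
          omega
        have hT1 : Tb lam (2 * m + 1) = 0 := by
          simp only [Tb]
          rw [if_neg (by omega)]
        rw [hT, hT1]
        have hX : Xb lam (2 * m + 1) = lam⁻¹ ^ ((Nat.digits 2 m).sum + 1) := by
          rw [Xb, bs_two_mul_add_one]
        rw [hX, pow_succ, Xb]
        ring
      · -- N = 2m+1 odd, N+1 = 2(m+1) even
        subst hm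
        have hT : Tb lam (2 * m + 1) = 0 := by
          simp only [Tb]
          rw [if_neg (by omega)]
        have h2 : 2 * m + 1 + 1 = 2 * (m + 1) := by omega
        rw [hT, h2]
        have hT2 : Tb lam (2 * (m + 1)) = Xb lam (m + 1) := by
          simp only [Tb, if_pos (Dvd.intro (m + 1) rfl)]
          congr 1
          omega
        rw [hT2]
        have hX : Xb lam (2 * (m + 1)) = Xb lam (m + 1) := by
          rw [Xb, Xb, bs_two_mul]
        rw [mul_zero, zero_add, hX]

lemma tauFun_x0_natCast (lam : ℂ) (N : ℕ) :
    tauFun (x0Fun lam) (N : ℤ) = Tb lam N := by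
  simp only [tauFun, Tb]
  by_cases hd : 2 ∣ N
  · rw [if_pos (by exact_mod_cast Int.natCast_dvd_natCast.2 hd), if_pos hd]
    have : (N : ℤ) / 2 = ((N / 2 : ℕ) : ℤ) := by omega
    rw [this, x0Fun_natCast, Xb]
  · rw [if_neg (by omega), if_neg hd]

/-! ### Pairing consecutive terms -/

lemma pair_sum (a : ℕ → ℂ) (J : ℕ) :
    ∑ i ∈ Finset.range (2 * J), a i
      = ∑ j ∈ Finset.range J, (a (2 * j) + a (2 * j + 1)) := by
  induction J with
  | zero => simp
  | succ J ih =>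
      have h2 : 2 * (J + 1) = (2 * J + 1) + 1 := by ring
      rw [h2, Finset.sum_range_succ, Finset.sum_range_succ, Finset.sum_range_succ, ih]
      ring

/-! ### The terms of the series -/

section terms

variable (lam : ℂ) (h : 1 < ‖lam‖)

/-- `y = x₀ - λ⁻¹ σ x₀`. -/
def yelt : ellInf := x0L lam h - lam⁻¹ • zshift 1 (x0L lam h)

lemma yelt_apply (k : ℤ) :
    yelt lam h k = x0Fun lam k - lam⁻¹ * x0Fun lam (k - 1) := by
  simp only [yelt, lp.coeFn_sub, Pi.sub_apply, lp.coeFn_smul, Pi.smul_apply, smul_eq_mul]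
  rfl

/-- the terms of the series. -/
def fterm (j : ℕ) : ellInf := lam⁻¹ ^ (2 * j) • zshift (2 * (j : ℤ)) (yelt lam h)

lemma fterm_apply (j : ℕ) (n : ℤ) :
    fterm lam h j n
      = lam⁻¹ ^ (2 * j) * (x0Fun lam (n - 2 * j) - lam⁻¹ * x0Fun lam (n - 2 * j - 1)) := by
  have : fterm lam h j n = lam⁻¹ ^ (2 * j) * (yelt lam h (n - 2 * j)) := by
    simp only [fterm, lp.coeFn_smul, Pi.smul_apply, smul_eq_mul, zshift_apply]
  rw [this, yelt_apply]

lemma fterm_eq_pair (j : ℕ) (n : ℤ) :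
    fterm lam h j n
      = ((-1 : ℂ) ^ (2 * j) * lam⁻¹ ^ (2 * j) * x0Fun lam (n - (2 * j : ℕ)))
        + ((-1 : ℂ) ^ (2 * j + 1) * lam⁻¹ ^ (2 * j + 1) * x0Fun lam (n - (2 * j + 1 : ℕ))) := by
  rw [fterm_apply]
  have e1 : ((-1 : ℂ)) ^ (2 * j) = 1 := by
    rw [pow_mul]; norm_num
  have e2 : ((-1 : ℂ)) ^ (2 * j + 1) = -1 := by
    rw [pow_succ, e1]; ring
  have a1 : n - ((2 * j : ℕ) : ℤ) = n - 2 * j := by push_cast; ring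
  have a2 : n - ((2 * j + 1 : ℕ) : ℤ) = n - 2 * j - 1 := by push_cast; ring
  rw [e1, e2, a1, a2, pow_succ]
  ring

lemma fterm_hasSum_coord (n : ℤ) :
    HasSum (fun j => fterm lam h j n) (tauFun (x0Fun lam) n) := by
  rcases lt_or_ge n 0 with hn | hn
  · -- everything vanishes
    have hz : ∀ j : ℕ, fterm lam h j n = 0 := by
      intro j
      rw [fterm_apply, x0Fun_neg lam (by omega), x0Fun_neg lam (by omega)]
      ring
    have ht : tauFun (x0Fun lam) n = 0 := by
      simp only [tauFun]
      split_ifs with hd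
      · exact x0Fun_neg lam (by omega)
      · rfl
    have hfun : (fun j : ℕ => fterm lam h j n) = fun _ => (0 : ℂ) := funext hz
    rw [ht, hfun]
    exact hasSum_zero
  · obtain ⟨N, rfl⟩ := Int.eq_ofNat_of_zero_le hn
    -- terms with j ≥ N+1 vanish
    have hvanish : ∀ j ∉ Finset.range (N + 1), fterm lam h j ((N : ℕ) : ℤ) = 0 := by
      intro j hj
      rw [Finset.mem_range, not_lt] at hj
      rw [fterm_apply, x0Fun_neg lam (by omega), x0Fun_neg lam (by omega)]
      ring
    have hfin := hasSum_sum_of_ne_finset_zero (L := SummationFilter.unconditional ℕ) hvanish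
    have hsum : ∑ j ∈ Finset.range (N + 1), fterm lam h j ((N : ℕ) : ℤ)
        = tauFun (x0Fun lam) ((N : ℕ) : ℤ) := by
      have hp : ∑ j ∈ Finset.range (N + 1), fterm lam h j ((N : ℕ) : ℤ)
          = ∑ i ∈ Finset.range (2 * (N + 1)),
              ((-1 : ℂ) ^ i * lam⁻¹ ^ i * x0Fun lam ((N : ℤ) - (i : ℕ))) := by
        rw [pair_sum]
        exact Finset.sum_congr rfl fun j _ => fterm_eq_pair lam h j _
      rw [hp]
      have hshrink : ∑ i ∈ Finset.range (2 * (N + 1)),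
            ((-1 : ℂ) ^ i * lam⁻¹ ^ i * x0Fun lam ((N : ℤ) - (i : ℕ)))
          = ∑ i ∈ Finset.range (N + 1),
              ((-1 : ℂ) ^ i * lam⁻¹ ^ i * x0Fun lam ((N : ℤ) - (i : ℕ))) := by
        refine (Finset.sum_subset ?_ ?_).symm
        · intro i hi
          rw [Finset.mem_range] at *
          omega
        · intro i _ hi
          rw [Finset.mem_range, not_lt] at hi
          rw [x0Fun_neg lam (by omega)]
          ring
      rw [hshrink, tauFun_x0_natCast, ← key_nat lam N]
      refine Finset.sum_congr rfl fun i hi => ?_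
      rw [Finset.mem_range] at hi
      have : (N : ℤ) - (i : ℕ) = ((N - i : ℕ) : ℤ) := by omega
      rw [this, x0Fun_natCast, Xb]
    rw [← hsum]
    exact hfin

lemma fterm_summable : Summable (fterm lam h) := by
  have hr : ‖lam⁻¹‖ < 1 := by
    rw [norm_inv]
    exact inv_lt_one_of_one_lt₀ h
  have hr2 : ‖lam⁻¹‖ ^ 2 < 1 :=
    pow_lt_one₀ (norm_nonneg _) hr two_ne_zero
  have hg : Summable (fun j : ℕ => ‖yelt lam h‖ * (‖lam⁻¹‖ ^ 2) ^ j) :=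
    (summable_geometric_of_lt_one (by positivity) hr2).mul_left _
  have hb : ∀ j : ℕ, ‖fterm lam h j‖ ≤ ‖yelt lam h‖ * (‖lam⁻¹‖ ^ 2) ^ j := by
    intro j
    rw [fterm, norm_smul, norm_pow]
    have hshift : ‖zshift (2 * (j : ℤ)) (yelt lam h)‖ ≤ ‖yelt lam h‖ := by
      refine lp.norm_le_of_forall_le (norm_nonneg (yelt lam h)) fun n => ?_
      exact lp.norm_apply_le_norm ENNReal.top_ne_zero (yelt lam h) (n - 2 * (j : ℤ))
    calc ‖lam⁻¹‖ ^ (2 * j) * ‖zshift (2 * (j : ℤ)) (yelt lam h)‖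
        ≤ ‖lam⁻¹‖ ^ (2 * j) * ‖yelt lam h‖ :=
          mul_le_mul_of_nonneg_left hshift (by positivity)
      _ = ‖yelt lam h‖ * (‖lam⁻¹‖ ^ 2) ^ j := by
          rw [← pow_mul]
          ring
  have hnorm : Summable fun j : ℕ => ‖fterm lam h j‖ :=
    hg.of_nonneg_of_le (fun j => norm_nonneg _) hb
  exact hnorm.of_norm

lemma fterm_hasSum : HasSum (fterm lam h) (tauL (x0L lam h)) := by
  obtain ⟨S, hS⟩ := fterm_summable lam h
  have hSe : S = tauL (x0L lam h) := by
    refine lp_ext' fun n => ?_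
    have h1 : HasSum (fun j => fterm lam h j n) (S n) := by
      have := hS.mapL (evalCLM n)
      simpa only [evalCLM_apply] using this
    have h2 : HasSum (fun j => fterm lam h j n) (tauL (x0L lam h) n) := by
      have := fterm_hasSum_coord lam h n
      exact this
    exact h1.unique h2
  rwa [hSe] at hS

/-! ### Membership in `Flam` -/

lemma mem_Flam_of_span {x : ellInf}
    (hx : x ∈ Submodule.span ℂ (Set.range fun m : ℤ => zshift m (x0L lam h))) :
    x ∈ Flam lam h :=
  Submodule.le_topologicalClosure _ hx

lemma zshift_x0_mem (m : ℤ) : zshift m (x0L lam h) ∈ Flam lam h :=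
  mem_Flam_of_span lam h (Submodule.subset_span ⟨m, rfl⟩)

lemma clm_preserves (T : ellInf →L[ℂ] ellInf)
    (hT : ∀ m : ℤ, T (zshift m (x0L lam h)) ∈ Flam lam h) :
    ∀ x ∈ Flam lam h, T x ∈ Flam lam h := by
  intro x hx
  have hle : Submodule.span ℂ (Set.range fun m : ℤ => zshift m (x0L lam h))
      ≤ Submodule.comap (T : ellInf →ₗ[ℂ] ellInf) (Flam lam h) := by
    rw [Submodule.span_le]
    rintro _ ⟨m, rfl⟩
    exact hT m
  have hclosed : IsClosed ((Submodule.comap (T : ellInf →ₗ[ℂ] ellInf) (Flam lam h)) :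
      Set ellInf) := by
    have : ((Submodule.comap (T : ellInf →ₗ[ℂ] ellInf) (Flam lam h)) : Set ellInf)
        = T ⁻¹' (Flam lam h : Set ellInf) := rfl
    rw [this]
    exact ((Submodule.span ℂ _).isClosed_topologicalClosure).preimage T.continuous
  exact Submodule.topologicalClosure_minimal _ hle hclosed hx

lemma zshift_preserves (k : ℤ) : ∀ x ∈ Flam lam h, zshift k x ∈ Flam lam h := by
  intro x hx
  have := clm_preserves lam h (zshiftCLM k) (fun m => by
    rw [zshiftCLM_apply, zshift_zshift]
    exact zshift_x0_mem lam h _) x hx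
  rwa [zshiftCLM_apply] at this

lemma fterm_mem (j : ℕ) : fterm lam h j ∈ Flam lam h := by
  refine mem_Flam_of_span lam h ?_
  rw [fterm]
  have hy : zshift (2 * (j : ℤ)) (yelt lam h)
      = zshift (2 * (j : ℤ)) (x0L lam h)
        - lam⁻¹ • zshift (2 * (j : ℤ) + 1) (x0L lam h) := by
    refine lp_ext' fun n => ?_
    rw [zshift_apply, yelt_apply]
    simp only [lp.coeFn_sub, Pi.sub_apply, lp.coeFn_smul, Pi.smul_apply, smul_eq_mul,
      zshift_apply]
    have harg : n - (2 * (j : ℤ) + 1) = n - 2 * (j : ℤ) - 1 := by ring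
    rw [harg]
    rfl
  rw [hy]
  refine Submodule.smul_mem _ _ (Submodule.sub_mem _ ?_ (Submodule.smul_mem _ _ ?_))
  · exact Submodule.subset_span ⟨2 * (j : ℤ), rfl⟩
  · exact Submodule.subset_span ⟨2 * (j : ℤ) + 1, rfl⟩

lemma tau_x0_mem : tauL (x0L lam h) ∈ Flam lam h := by
  have hclosed : IsClosed ((Flam lam h : Set ellInf)) :=
    (Submodule.span ℂ _).isClosed_topologicalClosure
  have htend := (fterm_hasSum lam h).tendsto_sum_nat
  exact hclosed.mem_of_tendsto htend
    (Filter.Eventually.of_forall fun N => Submodule.sum_mem _ fun j _ => fterm_mem lam h j)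

lemma tau_preserves : ∀ x ∈ Flam lam h, tauL x ∈ Flam lam h := by
  intro x hx
  have := clm_preserves lam h tauCLM (fun m => by
    rw [tauCLM_apply, tauL_zshift]
    exact zshift_preserves lam h _ _ (tau_x0_mem lam h)) x hx
  rwa [tauCLM_apply] at this

end terms

/-- For every `k ≥ 1`, `τ^k(x₀) ∈ F^{(λ)}`; in particular
`τ(x₀) = ∑_{j=0}^∞ λ^{−2j} σ^{2j}((id − λ⁻¹σ)(x₀))`, converging in norm in `ℓ∞(ℤ)`. -/
theorem statement_4 (lam : ℂ) (h : 1 < ‖lam‖) :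
    (∀ k : ℕ, 1 ≤ k → tauL^[k] (x0L lam h) ∈ Flam lam h) ∧
    HasSum
      (fun j : ℕ =>
        lam⁻¹ ^ (2 * j) • zshift (2 * (j : ℤ)) (x0L lam h - lam⁻¹ • zshift 1 (x0L lam h)))
      (tauL (x0L lam h)) := by
  constructor
  · intro k hk
    induction k with
    | zero => omega
    | succ k ih =>
        rcases Nat.eq_zero_or_pos k with rfl | hk'
        · simpa using tau_x0_mem lam h
        · rw [Function.iterate_succ_apply']
          exact tau_preserves lam h _ (ih hk')
  · exact fterm_hasSum lam h
end
end

section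
/- The canonical map ι_{F^{(λ)}} : ℓ₁(ℤ) → (F^{(λ)})*, given by ⟨ι_{F^{(λ)}}(a), x⟩ = ∑_{n∈ℤ} x(n)a(n), is injective: if a ∈ ℓ₁(ℤ) satisfies ∑_{n∈ℤ} x(n)a(n) = 0 for all x ∈ F^{(λ)}, then a = 0. -/
open scoped ENNReal
open Filter Topology

noncomputable section

/-! ### Auxiliary lemmas -/

lemma natBin_two_mul (n : ℕ) : (Nat.digits 2 (2 * n)).sum = (Nat.digits 2 n).sum := by
  rcases Nat.eq_zero_or_pos n with rfl | hn
  · simp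
  · rw [Nat.digits_def' (by norm_num : 1 < 2) (by omega)]
    have h1 : 2 * n % 2 = 0 := by omega
    have h2 : 2 * n / 2 = n := by omega
    rw [h1, h2, List.sum_cons, Nat.zero_add]

lemma natBin_two_mul_add_one (n : ℕ) :
    (Nat.digits 2 (2 * n + 1)).sum = 1 + (Nat.digits 2 n).sum := by
  rw [Nat.digits_def' (by norm_num : 1 < 2) (by omega)]
  have h1 : (2 * n + 1) % 2 = 1 := by omega
  have h2 : (2 * n + 1) / 2 = n := by omega
  rw [h1, h2, List.sum_cons]

lemma x0Fun_zero (lam : ℂ) : x0Fun lam 0 = 1 := by simp [x0Fun, binOnes]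

lemma x0Fun_even (lam : ℂ) (k : ℤ) : x0Fun lam (2 * k) = x0Fun lam k := by
  rcases le_or_gt 0 k with hk | hk
  · have ht : (2 * k).toNat = 2 * k.toNat := by omega
    simp only [x0Fun, binOnes, if_pos hk, if_pos (by omega : (0:ℤ) ≤ 2 * k), ht, natBin_two_mul]
  · simp only [x0Fun, if_neg (by omega : ¬ (0:ℤ) ≤ 2 * k), if_neg (not_le.mpr hk)]

lemma x0Fun_odd (lam : ℂ) (k : ℤ) : x0Fun lam (2 * k + 1) = lam⁻¹ * x0Fun lam k := by
  rcases le_or_gt 0 k with hk | hk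
  · have ht : (2 * k + 1).toNat = 2 * k.toNat + 1 := by omega
    simp only [x0Fun, binOnes, if_pos hk, if_pos (by omega : (0:ℤ) ≤ 2 * k + 1), ht,
      natBin_two_mul_add_one, pow_add, pow_one]
  · simp only [x0Fun, if_neg (by omega : ¬ (0:ℤ) ≤ 2 * k + 1), if_neg (not_le.mpr hk), mul_zero]

lemma x0Fun_norm_le (lam : ℂ) (h : 1 < ‖lam‖) (k : ℤ) : ‖x0Fun lam k‖ ≤ 1 := by
  simp only [x0Fun]
  split_ifs
  · rw [norm_pow]
    exact pow_le_one₀ (norm_nonneg _) (by rw [norm_inv]; exact inv_le_one_of_one_le₀ h.le)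
  · simp

lemma summable_norm_aux (lam : ℂ) (h : 1 < ‖lam‖) {c : ℤ → ℂ}
    (hc : Summable fun n => ‖c n‖) {g : ℤ → ℤ} (hg : Function.Injective g) :
    Summable (fun k : ℤ => ‖x0Fun lam k * c (g k)‖) := by
  refine Summable.of_nonneg_of_le (fun k => norm_nonneg _) (fun k => ?_) (hc.comp_injective hg)
  rw [norm_mul]
  exact mul_le_of_le_one_left (norm_nonneg _) (x0Fun_norm_le lam h k)

lemma summable_aux (lam : ℂ) (h : 1 < ‖lam‖) {c : ℤ → ℂ}
    (hc : Summable fun n => ‖c n‖) {g : ℤ → ℤ} (hg : Function.Injective g) :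
    Summable (fun k : ℤ => x0Fun lam k * c (g k)) :=
  (summable_norm_aux lam h hc hg).of_norm

lemma norm_tsum_aux (lam : ℂ) (h : 1 < ‖lam‖) {c : ℤ → ℂ}
    (hc : Summable fun n => ‖c n‖) {g : ℤ → ℤ} (hg : Function.Injective g) :
    ‖∑' k : ℤ, x0Fun lam k * c (g k)‖ ≤ ∑' n : ℤ, ‖c n‖ := by
  calc ‖∑' k : ℤ, x0Fun lam k * c (g k)‖ ≤ ∑' k : ℤ, ‖x0Fun lam k * c (g k)‖ :=
        norm_tsum_le_tsum_norm (summable_norm_aux lam h hc hg)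
    _ ≤ ∑' k : ℤ, ‖c (g k)‖ := by
        refine Summable.tsum_le_tsum (fun k => ?_) (summable_norm_aux lam h hc hg) (hc.comp_injective hg)
        rw [norm_mul]
        exact mul_le_of_le_one_left (norm_nonneg _) (x0Fun_norm_le lam h k)
    _ ≤ ∑' n : ℤ, ‖c n‖ :=
        Summable.tsum_le_tsum_of_inj g hg (fun n _ => norm_nonneg _) (fun k => le_rfl)
          (hc.comp_injective hg) hc

/-- Key halving step: if all shifts of `x₀` annihilate `c`, then so do all shifts of the
"even part" relation. -/
lemma step_aux (lam : ℂ) (h : 1 < ‖lam‖) (c : ℤ → ℂ) (hc : Summable fun n => ‖c n‖)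
    (H : ∀ m : ℤ, ∑' k : ℤ, x0Fun lam k * c (m + k) = 0) (m : ℤ) :
    ∑' k : ℤ, x0Fun lam k * c (m + 2 * k) = 0 := by
  classical
  have hlam0 : lam ≠ 0 := by
    intro h0
    rw [h0, norm_zero] at h
    linarith
  set U : ℤ → ℂ := fun m => ∑' k : ℤ, x0Fun lam k * c (m + 2 * k) with hUdef
  have hinj2 : ∀ m : ℤ, Function.Injective (fun k : ℤ => m + 2 * k) := by
    intro m a b hab
    simp only at hab
    omega
  have hrec : ∀ m : ℤ, U m + lam⁻¹ * U (m + 1) = 0 := by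
    intro p
    have hinj1 : Function.Injective (fun k : ℤ => p + k) := by
      intro a b hab; simpa using hab
    set f : ℤ → ℂ := fun k => x0Fun lam k * c (p + k) with hfdef
    have hf : Summable f := summable_aux lam h hc hinj1
    have hge : Summable (fun k => if Even k then f k else 0) := by
      refine hf.norm.of_norm_bounded (fun k => ?_)
      split_ifs <;> simp [norm_nonneg]
    have hgo : Summable (fun k => if Even k then (0:ℂ) else f k) := by
      refine hf.norm.of_norm_bounded (fun k => ?_)
      split_ifs <;> simp [norm_nonneg]
    have h1 : ∑' k, f k = (∑' k, if Even k then f k else 0) +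
        ∑' k, if Even k then (0:ℂ) else f k := by
      rw [← Summable.tsum_add hge hgo]
      refine tsum_congr fun k => ?_
      split_ifs <;> ring
    have h2 : (∑' k : ℤ, if Even k then f k else 0) = ∑' j : ℤ, f (2 * j) := by
      rw [← Function.Injective.tsum_eq (g := fun j : ℤ => 2 * j)
        (fun a b hab => by simp only at hab; omega)
        (f := fun k => if Even k then f k else 0) ?_]
      · exact tsum_congr fun j => if_pos ⟨j, two_mul j⟩
      · intro x hx
        by_cases hev : Even x
        · obtain ⟨j, hj⟩ := hev
          exact ⟨j, show 2 * j = x by omega⟩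
        · simp [hev] at hx
    have h3 : (∑' k : ℤ, if Even k then (0:ℂ) else f k) = ∑' j : ℤ, f (2 * j + 1) := by
      rw [← Function.Injective.tsum_eq (g := fun j : ℤ => 2 * j + 1)
        (fun a b hab => by simp only at hab; omega)
        (f := fun k => if Even k then (0:ℂ) else f k) ?_]
      · refine tsum_congr fun j => if_neg (by simp [Int.even_add_one, parity_simps])
      · intro x hx
        by_cases hev : Even x
        · simp [hev] at hx
        · obtain ⟨j, hj⟩ := Int.not_even_iff_odd.mp hev
          exact ⟨j, show 2 * j + 1 = x by omega⟩
    have h4 : ∑' j : ℤ, f (2 * j) = U p := by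
      refine tsum_congr fun j => ?_
      show x0Fun lam (2 * j) * c (p + 2 * j) = x0Fun lam j * c (p + 2 * j)
      rw [x0Fun_even]
    have h5 : ∑' j : ℤ, f (2 * j + 1) = lam⁻¹ * U (p + 1) := by
      rw [hUdef]
      simp only
      rw [← tsum_mul_left]
      refine tsum_congr fun j => ?_
      show x0Fun lam (2 * j + 1) * c (p + (2 * j + 1)) = lam⁻¹ * (x0Fun lam j * c (p + 1 + 2 * j))
      have harg : p + (2 * j + 1) = p + 1 + 2 * j := by ring
      rw [harg, x0Fun_odd, mul_assoc]
    have := H p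
    rw [show (fun k => x0Fun lam k * c (p + k)) = f from rfl] at this
    rw [h1, h2, h3, h4, h5] at this
    exact this
  have hrec' : ∀ m : ℤ, U (m + 1) = -lam * U m := by
    intro p
    have h5 : lam⁻¹ * U (p + 1) = -U p := by
      have := hrec p
      linear_combination this
    calc U (p + 1) = lam * (lam⁻¹ * U (p + 1)) := by
          field_simp
      _ = lam * (-U p) := by rw [h5]
      _ = -lam * U p := by ring
  have hbd : ∀ m : ℤ, ‖U m‖ ≤ ∑' n : ℤ, ‖c n‖ := fun p =>
    norm_tsum_aux lam h hc (hinj2 p)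
  have hgrow : ∀ p : ℕ, ‖U (m + p)‖ = ‖lam‖ ^ p * ‖U m‖ := by
    intro p
    induction p with
    | zero => simp
    | succ p ih =>
        have harg : (m + (p + 1 : ℕ) : ℤ) = (m + p) + 1 := by push_cast; ring
        rw [harg, hrec', norm_mul, norm_neg, ih, pow_succ]
        ring
  by_contra hU
  have hUpos : 0 < ‖U m‖ := norm_pos_iff.mpr hU
  obtain ⟨p, hp⟩ := pow_unbounded_of_one_lt ((∑' n : ℤ, ‖c n‖) / ‖U m‖) h
  have : (∑' n : ℤ, ‖c n‖) < ‖lam‖ ^ p * ‖U m‖ := by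
    rw [div_lt_iff₀ hUpos] at hp
    linarith
  have h6 : (∑' n : ℤ, ‖c n‖) < ‖U (m + p)‖ := by rw [hgrow p]; exact this
  exact absurd (hbd (m + p)) (not_le.mpr h6)

lemma iter_aux (lam : ℂ) (h : 1 < ‖lam‖) (c : ℤ → ℂ) (hc : Summable fun n => ‖c n‖)
    (H : ∀ m : ℤ, ∑' k : ℤ, x0Fun lam k * c (m + k) = 0) :
    ∀ (N : ℕ) (m : ℤ), ∑' k : ℤ, x0Fun lam k * c (m + 2 ^ N * k) = 0 := by
  intro N
  induction N with
  | zero => intro m; simpa using H m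
  | succ N ih =>
      intro m
      have h2N : ((2:ℤ) ^ N) ≠ 0 := by positivity
      have hinj : Function.Injective (fun n : ℤ => m + 2 ^ N * n) := by
        intro a b hab
        simp only at hab
        exact mul_left_cancel₀ h2N (by linarith)
      have hc' : Summable fun n : ℤ => ‖c (m + 2 ^ N * n)‖ := hc.comp_injective hinj
      have H' : ∀ p : ℤ, ∑' k : ℤ, x0Fun lam k * c (m + 2 ^ N * (p + k)) = 0 := by
        intro p
        have hi := ih (m + 2 ^ N * p)
        rw [← hi]
        exact tsum_congr fun k => by
          rw [show m + 2 ^ N * (p + k) = m + 2 ^ N * p + 2 ^ N * k by ring]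
      have hstep := step_aux lam h (fun n => c (m + 2 ^ N * n)) hc' H' 0
      rw [← hstep]
      exact tsum_congr fun k => by
        rw [show m + 2 ^ (N + 1) * k = m + 2 ^ N * (0 + 2 * k) by ring]

lemma zero_of_all (lam : ℂ) (h : 1 < ‖lam‖) (c : ℤ → ℂ) (hc : Summable fun n => ‖c n‖)
    (H : ∀ m : ℤ, ∑' k : ℤ, x0Fun lam k * c (m + k) = 0) (m : ℤ) : c m = 0 := by
  classical
  have key := iter_aux lam h c hc H
  rw [← norm_eq_zero]
  by_contra hne
  have hpos : 0 < ‖c m‖ := lt_of_le_of_ne (norm_nonneg _) (Ne.symm hne)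
  obtain ⟨s, hs⟩ := ((tendsto_order.1 (tendsto_tsum_compl_atTop_zero
      (fun n : ℤ => ‖c n‖))).2 _ hpos).exists
  obtain ⟨B, hB⟩ := s.exists_le
  set N : ℕ := (B - m).toNat with hNdef
  have h2N1 : (1:ℤ) ≤ 2 ^ N := by have := pow_pos (by norm_num : (0:ℤ) < 2) N; omega
  have h2N : B < m + 2 ^ N := by
    have h1 : B - m ≤ (N : ℤ) := Int.self_le_toNat _
    have h2 : (N : ℤ) < 2 ^ N := by exact_mod_cast Nat.lt_two_pow_self
    omega
  have h2Nne : ((2:ℤ) ^ N) ≠ 0 := by positivity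
  have hinjN : Function.Injective (fun k : ℤ => m + 2 ^ N * k) := by
    intro a b hab
    simp only at hab
    exact mul_left_cancel₀ h2Nne (by linarith)
  have hsum : Summable (fun k : ℤ => x0Fun lam k * c (m + 2 ^ N * k)) :=
    summable_aux lam h hc hinjN
  have hk := key N m
  rw [Summable.tsum_eq_add_tsum_ite hsum 0] at hk
  rw [x0Fun_zero, mul_zero, add_zero, one_mul] at hk
  have hcm : ‖c m‖ = ‖∑' k : ℤ, ite (k = 0) (0:ℂ) (x0Fun lam k * c (m + 2 ^ N * k))‖ := by
    have : c m = -∑' k : ℤ, ite (k = 0) (0:ℂ) (x0Fun lam k * c (m + 2 ^ N * k)) := by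
      linear_combination hk
    rw [this, norm_neg]
  set ind : ℤ → ℝ := fun k => if 1 ≤ k then ‖c (m + 2 ^ N * k)‖ else 0 with hind
  have hsumind : Summable ind := by
    refine Summable.of_nonneg_of_le (fun k => ?_) (fun k => ?_) (hc.comp_injective hinjN)
    · rw [hind]; dsimp only; split_ifs
      · exact norm_nonneg _
      · exact le_rfl
    · rw [hind]; dsimp only; split_ifs
      · exact le_rfl
      · exact norm_nonneg _
  have hnormite :
      Summable (fun k : ℤ => ‖ite (k = 0) (0:ℂ) (x0Fun lam k * c (m + 2 ^ N * k))‖) := by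
    refine Summable.of_nonneg_of_le (fun k => norm_nonneg _) (fun k => ?_)
      (summable_norm_aux lam h hc hinjN)
    split_ifs
    · rw [norm_zero]; positivity
    · exact le_rfl
  have hb1 : ‖∑' k : ℤ, ite (k = 0) (0:ℂ) (x0Fun lam k * c (m + 2 ^ N * k))‖ ≤
      ∑' k : ℤ, ‖ite (k = 0) (0:ℂ) (x0Fun lam k * c (m + 2 ^ N * k))‖ :=
    norm_tsum_le_tsum_norm hnormite
  have hb2 : (∑' k : ℤ, ‖ite (k = 0) (0:ℂ) (x0Fun lam k * c (m + 2 ^ N * k))‖) ≤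
      ∑' k : ℤ, ind k := by
    refine Summable.tsum_le_tsum (fun k => ?_) hnormite hsumind
    rw [hind]; dsimp only
    rcases eq_or_ne k 0 with rfl | hk0
    · simp
    · rw [if_neg hk0]
      by_cases hk1 : 1 ≤ k
      · rw [if_pos hk1, norm_mul]
        exact mul_le_of_le_one_left (norm_nonneg _) (x0Fun_norm_le lam h k)
      · have hkneg : k < 0 := by omega
        rw [if_neg hk1]
        have : x0Fun lam k = 0 := by simp [x0Fun, not_le.mpr hkneg]
        simp [this]
  have hb3 : (∑' k : ℤ, ind k) = ∑' (k : {k : ℤ // 1 ≤ k}), ‖c (m + 2 ^ N * (k:ℤ))‖ := by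
    have ht := tsum_subtype {k : ℤ | 1 ≤ k} (fun k => ‖c (m + 2 ^ N * k)‖)
    refine Eq.trans (tsum_congr fun k => ?_) ht.symm
    by_cases h1 : (1:ℤ) ≤ k <;> simp [hind, Set.indicator_apply, h1]
  have hb4 : (∑' (k : {k : ℤ // 1 ≤ k}), ‖c (m + 2 ^ N * (k:ℤ))‖) ≤
      ∑' (x : {x : ℤ // x ∉ s}), ‖c (x:ℤ)‖ := by
    have hmem : ∀ k : {k : ℤ // 1 ≤ k}, m + 2 ^ N * (k:ℤ) ∉ s := by
      rintro ⟨k, hk⟩ hmem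
      have := hB _ hmem
      have h2 : m + 2 ^ N ≤ m + 2 ^ N * k := by nlinarith
      simp only at this h2
      omega
    refine Summable.tsum_le_tsum_of_inj (fun k => (⟨m + 2 ^ N * (k:ℤ), hmem k⟩ : {x : ℤ // x ∉ s}))
      ?_ (fun _ _ => norm_nonneg _) (fun k => le_rfl) ?_ ?_
    · rintro ⟨a, ha⟩ ⟨b, hb⟩ hab
      simp only [Subtype.mk.injEq] at hab
      exact Subtype.ext (mul_left_cancel₀ h2Nne (by linarith))
    · exact ((hc.comp_injective hinjN).subtype _)
    · exact hc.subtype _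
  have : ‖c m‖ < ‖c m‖ := by
    calc ‖c m‖ = _ := hcm
      _ ≤ ∑' k : ℤ, ‖ite (k = 0) (0:ℂ) (x0Fun lam k * c (m + 2 ^ N * k))‖ := hb1
      _ ≤ ∑' k : ℤ, ind k := hb2
      _ = ∑' (k : {k : ℤ // 1 ≤ k}), ‖c (m + 2 ^ N * (k:ℤ))‖ := hb3
      _ ≤ ∑' (x : {x : ℤ // x ∉ s}), ‖c (x:ℤ)‖ := hb4
      _ < ‖c m‖ := hs
  exact lt_irrefl _ this

/-- The canonical map `ι_{F^{(λ)}} : ℓ₁(ℤ) → (F^{(λ)})*` is injective: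
if `∑_n x(n) a(n) = 0` for all `x ∈ F^{(λ)}`, then `a = 0`. -/
theorem statement_5 (lam : ℂ) (h : 1 < ‖lam‖) (a : ellOne)
    (ha : ∀ x : ellInf, x ∈ Flam lam h → ∑' n : ℤ, x n * a n = 0) : a = 0 := by
  have hca : Summable fun n : ℤ => ‖a n‖ := by
    have := (lp.memℓp a).summable (p := 1) (by norm_num)
    simpa using this
  have hyp0 : ∀ m : ℤ, ∑' k : ℤ, x0Fun lam k * a (m + k) = 0 := by
    intro m
    have hmem : zshift m (x0L lam h) ∈ Flam lam h :=
      Submodule.le_topologicalClosure _ (Submodule.subset_span ⟨m, rfl⟩)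
    have h1 : ∑' n : ℤ, x0Fun lam (n - m) * a n = 0 := ha _ hmem
    rw [← h1, ← (Equiv.addLeft m).tsum_eq (fun n => x0Fun lam (n - m) * a n)]
    exact tsum_congr fun k => by simp
  have hzero : ∀ m : ℤ, a m = 0 := zero_of_all lam h (fun n => a n) hca hyp0
  apply lp.ext
  funext n
  simpa using hzero n
end
end

section
/- The sets X_t^{(k)} (for t ∈ ℤ and k ≥ 1) are pairwise disjoint: if X_s^{(k)} ∩ X_t^{(l)} ≠ ∅ for s, t ∈ ℤ and k, l ≥ 1, then s = t and k = l. -/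
open scoped ENNReal
open Filter Topology

noncomputable section

/-- `U` is a free (non-principal) ultrafilter on `ℤ`. -/
def FreeUF (U : Ultrafilter ℤ) : Prop := ∀ z : ℤ, ({z} : Set ℤ) ∉ U

/-- the set `{2^{n₁} + ⋯ + 2^{n_k} + t : m < n₁ < n₂ < ⋯ < n_k}` (encoded by the `k`-element
set `{n₁, …, n_k}` of exponents, all `> m`). -/
def binSet (t : ℤ) (k m : ℕ) : Set ℤ :=
  {z | ∃ s : Finset ℕ, s.card = k ∧ (∀ i ∈ s, m < i) ∧ z = (∑ i ∈ s, (2 : ℤ) ^ i) + t}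

/-- the set `X_t^{(k)}` of free ultrafilters `U` on `ℤ` such that for every `m > 0` the set
`{2^{n₁} + ⋯ + 2^{n_k} + t : m < n₁ < ⋯ < n_k}` belongs to `U`. -/
def Xtk (t : ℤ) (k : ℕ) : Set (Ultrafilter ℤ) :=
  {U | FreeUF U ∧ ∀ m : ℕ, 0 < m → binSet t k m ∈ U}

/-- Statement 6.  The sets `X_t^{(k)}` (`t ∈ ℤ`, `k ≥ 1`) are pairwise disjoint: if
`X_s^{(k)} ∩ X_t^{(l)} ≠ ∅` then `s = t` and `k = l`. -/
theorem statement_6 (s t : ℤ) (k l : ℕ) (hk : 1 ≤ k) (hl : 1 ≤ l)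
    (h : (Xtk s k ∩ Xtk t l).Nonempty) : s = t ∧ k = l := by
  obtain ⟨U, ⟨-, hs⟩, ⟨-, ht⟩⟩ := h
  -- for each m > 0 the two binSets intersect
  have key : ∀ m : ℕ, 0 < m → ∃ A B : Finset ℕ, A.card = k ∧ B.card = l ∧
      (∀ i ∈ A, m < i) ∧ (∀ i ∈ B, m < i) ∧
      (∑ i ∈ A, (2 : ℤ) ^ i) + s = (∑ i ∈ B, (2 : ℤ) ^ i) + t := by
    intro m hm
    have : (binSet s k m ∩ binSet t l m).Nonempty :=
      Ultrafilter.nonempty_of_mem (inter_mem (hs m hm) (ht m hm))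
    obtain ⟨z, ⟨A, hA1, hA2, hA3⟩, ⟨B, hB1, hB2, hB3⟩⟩ := this
    exact ⟨A, B, hA1, hB1, hA2, hB2, by rw [← hA3, ← hB3]⟩
  have hst : s = t := by
    by_contra hne
    set d : ℤ := t - s with hd
    have hd0 : d ≠ 0 := sub_ne_zero.mpr (Ne.symm hne)
    set m : ℕ := d.natAbs with hmm
    have hm : 0 < m := Int.natAbs_pos.mpr hd0
    obtain ⟨A, B, hA1, hB1, hA2, hB2, heq⟩ := key m hm
    have hdvd : (2 : ℤ) ^ (m + 1) ∣ d := by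
      have : d = (∑ i ∈ A, (2 : ℤ) ^ i) - (∑ i ∈ B, (2 : ℤ) ^ i) := by linarith
      rw [this]
      apply dvd_sub <;>
      · apply Finset.dvd_sum
        intro i hi
        exact pow_dvd_pow 2 (by first | exact hA2 i hi | exact hB2 i hi)
    have hlt : |d| < (2 : ℤ) ^ (m + 1) := by
      rw [Int.abs_eq_natAbs, ← hmm]
      exact_mod_cast (Nat.lt_two_pow_self (n := m)).trans
        (pow_lt_pow_right₀ one_lt_two (Nat.lt_succ_self m))
    exact hd0 (Int.eq_zero_of_abs_lt_dvd hdvd hlt)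
  refine ⟨hst, ?_⟩
  obtain ⟨A, B, hA1, hB1, -, -, heq⟩ := key 1 one_pos
  subst hst
  have hsum : (∑ i ∈ A, (2 : ℤ) ^ i) = ∑ i ∈ B, (2 : ℤ) ^ i := by linarith
  have hnat : (∑ i ∈ A, (2 : ℕ) ^ i) = ∑ i ∈ B, (2 : ℕ) ^ i := by
    have : ((∑ i ∈ A, (2:ℕ) ^ i : ℕ) : ℤ) = ((∑ i ∈ B, (2:ℕ) ^ i : ℕ) : ℤ) := by
      push_cast; exact hsum
    exact_mod_cast this
  have hAB : A = B := by
    rw [← Finset.toFinset_bitIndices_twoPowSum A, ← Finset.toFinset_bitIndices_twoPowSum B, hnat]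
  rw [← hA1, ← hB1, hAB]
end
end

section
/- Let y ∈ ℓ∞(ℤ) be finitely supported, with support I ⊆ ℤ. Then there exists x ∈ F^{(λ)} such that x(t) = y(t) for all t ∈ I and |x(t)| ≤ |λ|⁻¹ ‖y‖_∞ for all t ∉ I. -/
open scoped ENNReal
open Filter Topology

noncomputable section

namespace St9

variable {lam : ℂ}

def bN (m : ℕ) : ℕ := (Nat.digits 2 m).sum

lemma binOnes_coe (q : ℕ) : binOnes (q : ℤ) = bN q := by
  simp [binOnes, bN]

lemma bN_zero : bN 0 = 0 := by simp [bN]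

lemma bN_rec (m : ℕ) (hm : m ≠ 0) : bN m = m % 2 + bN (m / 2) := by
  rw [bN, Nat.digits_def' (b := 2) (by norm_num) (Nat.pos_of_ne_zero hm), List.sum_cons]; rfl

lemma bN_two_mul (m : ℕ) : bN (2 * m) = bN m := by
  rcases Nat.eq_zero_or_pos m with rfl | hm
  · rfl
  · rw [bN_rec (2 * m) (by omega), Nat.mul_mod_right, Nat.mul_div_cancel_left _ (by norm_num)]
    exact Nat.zero_add _

lemma bN_two_mul_add_one (m : ℕ) : bN (2 * m + 1) = bN m + 1 := by
  rw [bN_rec _ (by omega)]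
  have h1 : (2 * m + 1) % 2 = 1 := by omega
  have h2 : (2 * m + 1) / 2 = m := by omega
  rw [h1, h2, Nat.add_comm]

lemma bN_pos (m : ℕ) (hm : m ≠ 0) : 0 < bN m := by
  induction m using Nat.strong_induction_on with
  | _ m ih =>
    rw [bN_rec m hm]
    rcases Nat.eq_zero_or_pos (m % 2) with h | h
    · have h2 : m / 2 ≠ 0 := by omega
      have := ih (m / 2) (by omega) h2
      omega
    · omega

lemma key_sum (lam : ℂ) (q : ℕ) :
    ∑ r ∈ Finset.range (q + 1), (-lam⁻¹) ^ r * lam⁻¹ ^ bN (q - r)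
      = if q % 2 = 0 then lam⁻¹ ^ bN (q / 2) else 0 := by
  induction q with
  | zero => simp [bN_zero]
  | succ q ih =>
    rw [Finset.sum_range_succ']
    have hidx : ∀ i : ℕ, q + 1 - (i + 1) = q - i := fun i => Nat.succ_sub_succ q i
    simp only [hidx]
    have hfac : ∑ i ∈ Finset.range (q + 1), (-lam⁻¹) ^ (i + 1) * lam⁻¹ ^ bN (q - i)
        = -lam⁻¹ * ∑ i ∈ Finset.range (q + 1), (-lam⁻¹) ^ i * lam⁻¹ ^ bN (q - i) := by
      rw [Finset.mul_sum]
      refine Finset.sum_congr rfl fun i _ => ?_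
      rw [pow_succ]; ring
    rw [hfac, ih]
    rcases Nat.even_or_odd q with ⟨m, hm⟩ | ⟨m, hm⟩
    · -- q = m + m
      have hq : q = 2 * m := by omega
      have h0 : q % 2 = 0 := by omega
      have h1 : (q + 1) % 2 = 1 := by omega
      have h2 : q / 2 = m := by omega
      have h3 : bN (q + 1) = bN m + 1 := by rw [show q + 1 = 2 * m + 1 by omega, bN_two_mul_add_one]
      simp only [h0, if_true, h1, h2, h3, Nat.sub_zero, pow_zero, one_mul, Nat.add_comm 1 q]
      rw [if_neg one_ne_zero, pow_succ]; ring
    · -- q = 2m+1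
      have h0 : ¬ q % 2 = 0 := by omega
      have h1 : (q + 1) % 2 = 0 := by omega
      have h2 : (q + 1) / 2 = m + 1 := by omega
      have h3 : bN (q + 1) = bN (m + 1) := by rw [show q + 1 = 2 * (m + 1) by omega, bN_two_mul]
      simp only [h0, if_false, h1, if_true, h2, h3, Nat.sub_zero, pow_zero, one_mul,
        Nat.add_comm 1 q]
      ring



lemma x0Fun_zero (lam : ℂ) : x0Fun lam 0 = 1 := by simp [x0Fun, binOnes]

lemma x0Fun_of_neg (lam : ℂ) {n : ℤ} (hn : n < 0) : x0Fun lam n = 0 := if_neg (by omega)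

lemma x0Fun_norm_le_one (h : 1 < ‖lam‖) (n : ℤ) : ‖x0Fun lam n‖ ≤ 1 := by
  unfold x0Fun
  split_ifs
  · rw [norm_pow, norm_inv]
    exact pow_le_one₀ (by positivity) (inv_le_one_of_one_le₀ h.le)
  · simp

lemma x0Fun_norm_le_inv (h : 1 < ‖lam‖) {n : ℤ} (hn : 0 < n) : ‖x0Fun lam n‖ ≤ ‖lam‖⁻¹ := by
  rw [x0Fun]
  simp only [if_pos hn.le]
  rw [norm_pow, norm_inv]
  have hb : 1 ≤ binOnes n := bN_pos n.toNat (by omega)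
  calc ‖lam‖⁻¹ ^ binOnes n ≤ ‖lam‖⁻¹ ^ 1 :=
        pow_le_pow_of_le_one (by positivity) (inv_le_one_of_one_le₀ h.le) hb
    _ = ‖lam‖⁻¹ := pow_one _

def wFun (lam : ℂ) (K : ℕ) : ℤ → ℂ := fun n =>
  if (2 ^ K : ℤ) ∣ n then x0Fun lam (n / 2 ^ K) else 0

lemma two_pow_pos (K : ℕ) : (0 : ℤ) < 2 ^ K := by positivity

lemma wFun_zero_eq (lam : ℂ) : wFun lam 0 = x0Fun lam := by
  funext n; simp [wFun]

lemma wFun_mul (lam : ℂ) (K : ℕ) (q : ℤ) : wFun lam K (2 ^ K * q) = x0Fun lam q := by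
  rw [wFun]
  simp only [if_pos (dvd_mul_right _ q)]
  rw [Int.mul_ediv_cancel_left q (two_pow_pos K).ne']

lemma wFun_of_neg (lam : ℂ) (K : ℕ) {n : ℤ} (hn : n < 0) : wFun lam K n = 0 := by
  rw [wFun]
  split_ifs with hd
  · exact x0Fun_of_neg lam (Int.ediv_neg_of_neg_of_pos hn (two_pow_pos K))
  · rfl

lemma wFun_norm_le_one (h : 1 < ‖lam‖) (K : ℕ) (n : ℤ) : ‖wFun lam K n‖ ≤ 1 := by
  rw [wFun]
  split_ifs
  · exact x0Fun_norm_le_one h _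
  · simp

lemma wFun_zero (lam : ℂ) (K : ℕ) : wFun lam K 0 = 1 := by
  rw [wFun]
  simp [x0Fun_zero]

lemma wFun_ne_zero (lam : ℂ) (K : ℕ) {m : ℤ} (hm : wFun lam K m ≠ 0) :
    (2 ^ K : ℤ) ∣ m ∧ 0 ≤ m := by
  rw [wFun] at hm
  split_ifs at hm with hd
  · refine ⟨hd, ?_⟩
    by_contra hneg
    exact hm (x0Fun_of_neg lam (Int.ediv_neg_of_neg_of_pos (by omega) (two_pow_pos K)))
  · exact absurd rfl hm

lemma wFun_norm_le_inv (h : 1 < ‖lam‖) (K : ℕ) {m : ℤ} (hm : m ≠ 0) :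
    ‖wFun lam K m‖ ≤ ‖lam‖⁻¹ := by
  rcases eq_or_ne (wFun lam K m) 0 with h0 | h0
  · rw [h0, norm_zero]; positivity
  · obtain ⟨hd, hpos⟩ := wFun_ne_zero lam K h0
    rw [wFun]
    simp only [if_pos hd]
    refine x0Fun_norm_le_inv h ?_
    obtain ⟨c, rfl⟩ := hd
    rw [Int.mul_ediv_cancel_left c (two_pow_pos K).ne']
    have h2 := two_pow_pos K
    rcases lt_or_ge 0 c with hc | hc
    · exact hc
    · exfalso
      have : (2 ^ K : ℤ) * c ≤ 0 := mul_nonpos_of_nonneg_of_nonpos h2.le hc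
      omega


lemma x0Fun_coe (lam : ℂ) (k : ℕ) : x0Fun lam (k : ℤ) = lam⁻¹ ^ bN k := by
  rw [x0Fun]
  simp only [Int.natCast_nonneg, if_true, binOnes_coe]

lemma psum_exact (lam : ℂ) (K : ℕ) (n : ℤ) (R : ℕ) (hR : n < 2 ^ K * R) :
    ∑ r ∈ Finset.range R, (-lam⁻¹) ^ r * wFun lam K (n - 2 ^ K * r) = wFun lam (K + 1) n := by
  rcases lt_or_ge n 0 with hn | hn
  · rw [wFun_of_neg lam (K + 1) hn]
    refine Finset.sum_eq_zero fun r _ => ?_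
    have h1 : (0 : ℤ) ≤ 2 ^ K * r := mul_nonneg (two_pow_pos K).le (Int.natCast_nonneg r)
    rw [wFun_of_neg lam K (by linarith), mul_zero]
  by_cases hd : (2 ^ K : ℤ) ∣ n
  · obtain ⟨q', hq'⟩ := hd
    have hq'0 : 0 ≤ q' := by
      rcases lt_or_ge q' 0 with hc | hc
      · exfalso
        have : (2 ^ K : ℤ) * q' < 0 := mul_neg_of_pos_of_neg (two_pow_pos K) hc
        omega
      · exact hc
    obtain ⟨q, rfl⟩ := Int.eq_ofNat_of_zero_le hq'0
    subst hq'
    have hqR : q < R := by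
      have h2 := two_pow_pos K
      have := lt_of_mul_lt_mul_left hR h2.le
      exact_mod_cast this
    have hterm : ∀ r : ℕ, wFun lam K (2 ^ K * (q : ℤ) - 2 ^ K * r) = x0Fun lam ((q : ℤ) - r) := by
      intro r
      rw [← mul_sub, wFun_mul]
    rw [Finset.sum_congr rfl fun r _ => by rw [hterm r]]
    have hsub : Finset.range (q + 1) ⊆ Finset.range R := Finset.range_subset_range.2 (by omega)
    have hzero : ∀ r ∈ Finset.range R, r ∉ Finset.range (q + 1) →
        (-lam⁻¹) ^ r * x0Fun lam ((q : ℤ) - r) = 0 := by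
      intro r _ hr
      simp only [Finset.mem_range, not_lt] at hr
      rw [x0Fun_of_neg lam (by omega), mul_zero]
    rw [← Finset.sum_subset hsub hzero]
    have hcast : ∀ r ∈ Finset.range (q + 1), (-lam⁻¹) ^ r * x0Fun lam ((q : ℤ) - r)
        = (-lam⁻¹) ^ r * lam⁻¹ ^ bN (q - r) := by
      intro r hr
      simp only [Finset.mem_range] at hr
      have : ((q : ℤ) - r) = ((q - r : ℕ) : ℤ) := by omega
      rw [this, x0Fun_coe]
    rw [Finset.sum_congr rfl hcast, key_sum]
    rcases Nat.even_or_odd q with ⟨m, hm⟩ | ⟨m, hm⟩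
    · have h0 : q % 2 = 0 := by omega
      have h2 : q / 2 = m := by omega
      have hn2 : (2 : ℤ) ^ K * q = 2 ^ (K + 1) * m := by
        push_cast [show q = 2 * m by omega]
        ring
      rw [if_pos h0, h2, hn2, wFun_mul, x0Fun_coe]
    · have h0 : ¬ q % 2 = 0 := by omega
      rw [if_neg h0]
      have hnd : ¬ ((2 : ℤ) ^ (K + 1) ∣ 2 ^ K * q) := by
        rintro ⟨c, hc⟩
        rw [pow_succ, mul_assoc] at hc
        have := mul_left_cancel₀ (two_pow_pos K).ne' hc
        omega
      rw [wFun, if_neg hnd]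
  · have hnd : ¬ ((2 : ℤ) ^ (K + 1) ∣ n) := by
      intro hdd
      exact hd (dvd_trans ⟨2, by ring⟩ hdd)
    rw [wFun, if_neg hnd]
    refine Finset.sum_eq_zero fun r _ => ?_
    have : ¬ ((2 : ℤ) ^ K ∣ (n - 2 ^ K * r)) := by
      intro hdd
      have h2 := dvd_add hdd (dvd_mul_right (2 ^ K : ℤ) (r : ℤ))
      rw [sub_add_cancel] at h2
      exact hd h2
    rw [wFun, if_neg this, mul_zero]

lemma psum_tail (h : 1 < ‖lam‖) (K : ℕ) (R : ℕ) (n : ℤ) :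
    ‖(∑ r ∈ Finset.range R, (-lam⁻¹) ^ r * wFun lam K (n - 2 ^ K * r)) - wFun lam (K + 1) n‖
      ≤ ‖lam‖⁻¹ ^ R * (1 - ‖lam‖⁻¹)⁻¹ := by
  set c : ℝ := ‖lam‖⁻¹ with hc
  have hc0 : 0 ≤ c := by positivity
  have hc1 : c < 1 := inv_lt_one_of_one_lt₀ h
  set f : ℕ → ℂ := fun r => (-lam⁻¹) ^ r * wFun lam K (n - 2 ^ K * r) with hf
  set R' : ℕ := max R (n.toNat + 1) with hR'
  have hRR' : R ≤ R' := le_max_left _ _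
  have hnR' : n < 2 ^ K * R' := by
    have h1 : n < (R' : ℤ) := by
      have h2 : (n.toNat + 1 : ℕ) ≤ R' := le_max_right _ _
      omega
    have h3 : (R' : ℤ) ≤ 2 ^ K * R' :=
      le_mul_of_one_le_left (Int.natCast_nonneg _) (two_pow_pos K)
    linarith
  rw [← psum_exact lam K n R' hnR']
  have hsplit : ∑ r ∈ Finset.range R', f r
      = (∑ r ∈ Finset.range R, f r) + ∑ r ∈ Finset.Ico R R', f r := by
    rw [Finset.range_eq_Ico, Finset.range_eq_Ico]
    exact (Finset.sum_Ico_consecutive f (Nat.zero_le R) hRR').symm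
  rw [hsplit, show (∑ r ∈ Finset.range R, f r)
      - ((∑ r ∈ Finset.range R, f r) + ∑ r ∈ Finset.Ico R R', f r)
      = -(∑ r ∈ Finset.Ico R R', f r) by ring, norm_neg]
  calc ‖∑ r ∈ Finset.Ico R R', f r‖ ≤ ∑ r ∈ Finset.Ico R R', ‖f r‖ := norm_sum_le _ _
    _ ≤ ∑ r ∈ Finset.Ico R R', c ^ r := by
        refine Finset.sum_le_sum fun r _ => ?_
        rw [hf]
        simp only []
        rw [norm_mul, norm_pow, norm_neg, norm_inv]
        exact mul_le_of_le_one_right (by positivity) (wFun_norm_le_one h K _)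
    _ = c ^ R * ∑ i ∈ Finset.range (R' - R), c ^ i := by
        rw [Finset.sum_Ico_eq_sum_range, Finset.mul_sum]
        exact Finset.sum_congr rfl fun i _ => by rw [← pow_add]
    _ ≤ c ^ R * (1 - c)⁻¹ := by
        refine mul_le_mul_of_nonneg_left ?_ (by positivity)
        rw [← tsum_geometric_of_lt_one hc0 hc1]
        exact Summable.sum_le_tsum _ (fun i _ => by positivity)
          (summable_geometric_of_lt_one hc0 hc1)


lemma zshift_coe (m : ℤ) (x : ellInf) : ⇑(zshift m x) = fun n => x (n - m) := rfl

lemma zshift_apply (m : ℤ) (x : ellInf) (n : ℤ) : zshift m x n = x (n - m) := rfl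

lemma zshift_add (m : ℤ) (x y : ellInf) : zshift m (x + y) = zshift m x + zshift m y := by
  apply lp.ext
  rw [lp.coeFn_add, zshift_coe, zshift_coe, zshift_coe]
  funext n
  simp [lp.coeFn_add]

lemma zshift_smul (m : ℤ) (c : ℂ) (x : ellInf) : zshift m (c • x) = c • zshift m x := by
  apply lp.ext
  rw [lp.coeFn_smul, zshift_coe, zshift_coe]
  funext n
  simp [lp.coeFn_smul]

lemma zshift_norm_le (m : ℤ) (x : ellInf) : ‖zshift m x‖ ≤ ‖x‖ :=
  lp.norm_le_of_forall_le (norm_nonneg x) fun n =>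
    lp.norm_apply_le_norm ENNReal.top_ne_zero x (n - m)

def zshiftCLM (m : ℤ) : ellInf →L[ℂ] ellInf :=
  LinearMap.mkContinuous
    { toFun := zshift m
      map_add' := zshift_add m
      map_smul' := zshift_smul m }
    1 (fun x => by rw [one_mul]; exact zshift_norm_le m x)

lemma zshiftCLM_apply (m : ℤ) (x : ellInf) : zshiftCLM m x = zshift m x := rfl

lemma zshift_zshift (m j : ℤ) (x : ellInf) : zshift m (zshift j x) = zshift (j + m) x := by
  apply lp.ext
  funext n
  show x (n - m - j) = x (n - (j + m))
  have he : n - m - j = n - (j + m) := by ring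
  rw [he]

lemma zshift_zero (x : ellInf) : zshift 0 x = x := by
  apply lp.ext
  funext n
  show x (n - 0) = x n
  rw [sub_zero]

lemma Flam_shift (lam : ℂ) (h : 1 < ‖lam‖) (m : ℤ) {x : ellInf} (hx : x ∈ Flam lam h) :
    zshift m x ∈ Flam lam h := by
  set S : Set ellInf := Set.range fun j : ℤ => zshift j (x0L lam h) with hS
  have hx' : x ∈ closure ((Submodule.span ℂ S : Submodule ℂ ellInf) : Set ellInf) := hx
  have h1 : zshift m x ∈
      closure ((zshiftCLM m) '' ((Submodule.span ℂ S : Submodule ℂ ellInf) : Set ellInf)) :=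
    image_closure_subset_closure_image (zshiftCLM m).continuous ⟨x, hx', rfl⟩
  have himg : (zshiftCLM m) '' S ⊆ S := by
    rintro _ ⟨_, ⟨j, rfl⟩, rfl⟩
    exact ⟨j + m, (zshift_zshift m j _).symm⟩
  have h2 : Submodule.map (zshiftCLM m : ellInf →ₗ[ℂ] ellInf) (Submodule.span ℂ S) ≤ Submodule.span ℂ S := by
    rw [Submodule.map_span]
    exact Submodule.span_le.2 (himg.trans Submodule.subset_span)
  have h3 : (⇑(zshiftCLM m)) '' ((Submodule.span ℂ S : Submodule ℂ ellInf) : Set ellInf)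
      ⊆ ((Submodule.span ℂ S : Submodule ℂ ellInf) : Set ellInf) := by
    rw [← ContinuousLinearMap.coe_coe, ← Submodule.map_coe]
    exact h2
  exact closure_mono h3 h1

lemma wFun_mem (lam : ℂ) (h : 1 < ‖lam‖) (K : ℕ) : Memℓp (wFun lam K) ∞ := by
  refine memℓp_infty ⟨1, ?_⟩
  rintro r ⟨n, rfl⟩
  exact wFun_norm_le_one h K n

def wL (lam : ℂ) (h : 1 < ‖lam‖) (K : ℕ) : ellInf := ⟨wFun lam K, wFun_mem lam h K⟩

lemma wL_apply (h : 1 < ‖lam‖) (K : ℕ) (n : ℤ) : wL lam h K n = wFun lam K n := rfl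

lemma wL_mem (lam : ℂ) (h : 1 < ‖lam‖) (K : ℕ) : wL lam h K ∈ Flam lam h := by
  induction K with
  | zero =>
    have : wL lam h 0 = x0L lam h := by
      apply lp.ext
      exact wFun_zero_eq lam
    rw [this]
    exact Submodule.le_topologicalClosure _
      (Submodule.subset_span ⟨0, zshift_zero (x0L lam h)⟩)
  | succ K ih =>
    set P : ℕ → ellInf := fun R =>
      ∑ r ∈ Finset.range R, ((-lam⁻¹) ^ r) • zshift ((2 ^ K : ℤ) * r) (wL lam h K) with hP
    have hPmem : ∀ R, P R ∈ Flam lam h := fun R =>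
      Submodule.sum_mem _ fun r _ =>
        Submodule.smul_mem _ _ (Flam_shift lam h _ ih)
    have hPapp : ∀ R n, P R n
        = ∑ r ∈ Finset.range R, (-lam⁻¹) ^ r * wFun lam K (n - 2 ^ K * r) := by
      intro R n
      rw [hP]
      rw [lp.coeFn_sum, Finset.sum_apply]
      refine Finset.sum_congr rfl fun r _ => ?_
      rw [lp.coeFn_smul, Pi.smul_apply, smul_eq_mul, zshift_apply, wL_apply]
    have hnorm : ∀ R, ‖P R - wL lam h (K + 1)‖ ≤ ‖lam‖⁻¹ ^ R * (1 - ‖lam‖⁻¹)⁻¹ := by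
      intro R
      refine lp.norm_le_of_forall_le ?_ fun n => ?_
      · have h1 : (0:ℝ) < 1 - ‖lam‖⁻¹ := by
          have := inv_lt_one_of_one_lt₀ h
          linarith
        positivity
      · have : (P R - wL lam h (K + 1)) n = P R n - wFun lam (K + 1) n := by
          rw [lp.coeFn_sub, Pi.sub_apply, wL_apply]
        rw [this, hPapp]
        exact psum_tail h K R n
    have hlim : Filter.Tendsto P Filter.atTop (𝓝 (wL lam h (K + 1))) := by
      rw [tendsto_iff_norm_sub_tendsto_zero]
      have hgeo : Filter.Tendsto (fun R : ℕ => ‖lam‖⁻¹ ^ R * (1 - ‖lam‖⁻¹)⁻¹)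
          Filter.atTop (𝓝 0) := by
        rw [show (0:ℝ) = 0 * (1 - ‖lam‖⁻¹)⁻¹ by ring]
        exact (tendsto_pow_atTop_nhds_zero_of_lt_one (by positivity)
          (inv_lt_one_of_one_lt₀ h)).mul_const _
      refine squeeze_zero (fun R => norm_nonneg _) hnorm hgeo
    have hcl : IsClosed ((Flam lam h : Submodule ℂ ellInf) : Set ellInf) :=
      Submodule.isClosed_topologicalClosure _
    exact hcl.mem_of_tendsto hlim (Filter.Eventually.of_forall hPmem)


end St9

/-- Statement 9.  If `y ∈ ℓ∞(ℤ)` is finitely supported, with support contained in the finite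
set `I` (i.e. `y(t) = 0` for `t ∉ I`), then there is `x ∈ F^{(λ)}` with `x(t) = y(t)` for
`t ∈ I` and `|x(t)| ≤ |λ|⁻¹ ‖y‖_∞` for `t ∉ I`. -/
theorem statement_9 (lam : ℂ) (h : 1 < ‖lam‖) (y : ℤ → ℂ) (I : Finset ℤ)
    (hsupp : ∀ t : ℤ, t ∉ I → y t = 0) :
    ∃ x : ellInf, x ∈ Flam lam h ∧ (∀ t ∈ I, x t = y t) ∧
      ∀ t : ℤ, t ∉ I → ‖x t‖ ≤ ‖lam‖⁻¹ * (⨆ s : ℤ, ‖y s‖) := by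
  classical
  have hbdd : BddAbove (Set.range fun s : ℤ => ‖y s‖) := by
    refine ⟨((I.sup fun t => ‖y t‖₊ : NNReal) : ℝ), ?_⟩
    rintro r ⟨s, rfl⟩
    show ‖y s‖ ≤ _
    by_cases hs : s ∈ I
    · exact_mod_cast NNReal.coe_le_coe.2 (Finset.le_sup (f := fun t => ‖y t‖₊) hs)
    · rw [hsupp s hs, norm_zero]
      positivity
  have hyle : ∀ t : ℤ, ‖y t‖ ≤ ⨆ s : ℤ, ‖y s‖ := fun t => le_ciSup hbdd t
  have hSup0 : (0:ℝ) ≤ ⨆ s : ℤ, ‖y s‖ := (norm_nonneg (y 0)).trans (hyle 0)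
  set M : ℕ := I.sup fun t => t.natAbs with hM
  set K : ℕ := 2 * M with hK
  have habs : ∀ t ∈ I, t.natAbs ≤ M := fun t ht =>
    Finset.le_sup (f := fun t : ℤ => t.natAbs) ht
  have h3n : 2 * M < 2 ^ K := by rw [hK]; exact Nat.lt_two_pow_self
  have h3 : (2 * (M:ℤ)) < 2 ^ K := by exact_mod_cast h3n
  have hdiam : ∀ s ∈ I, ∀ t ∈ I, |s - t| < (2 ^ K : ℤ) := by
    intro s hs t ht
    have h1 := habs s hs
    have h2 := habs t ht
    have hs1 : s ≤ (M:ℤ) ∧ -(M:ℤ) ≤ s := by omega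
    have ht1 : t ≤ (M:ℤ) ∧ -(M:ℤ) ≤ t := by omega
    rw [abs_lt]
    constructor <;> linarith [hs1.1, hs1.2, ht1.1, ht1.2]
  set w : ellInf := St9.wL lam h K with hw
  have hxapp : ∀ s : ℤ, (∑ t' ∈ I, y t' • zshift t' w) s
      = ∑ t' ∈ I, y t' * St9.wFun lam K (s - t') := by
    intro s
    rw [lp.coeFn_sum, Finset.sum_apply]
    refine Finset.sum_congr rfl fun t' _ => ?_
    rw [lp.coeFn_smul, Pi.smul_apply, smul_eq_mul, St9.zshift_apply, hw, St9.wL_apply]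
  refine ⟨∑ t ∈ I, y t • zshift t w, ?_, ?_, ?_⟩
  · exact Submodule.sum_mem _ fun t _ =>
      Submodule.smul_mem _ _ (St9.Flam_shift lam h t (St9.wL_mem lam h K))
  · intro t ht
    rw [hxapp t, Finset.sum_eq_single_of_mem t ht ?_]
    · rw [sub_self, St9.wFun_zero, mul_one]
    · intro t' ht' hne
      rcases eq_or_ne (St9.wFun lam K (t - t')) 0 with h0 | h0
      · rw [h0, mul_zero]
      · exfalso
        obtain ⟨hd, _⟩ := St9.wFun_ne_zero lam K h0
        have := Int.eq_zero_of_abs_lt_dvd hd (hdiam t ht t' ht')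
        omega
  · intro s hsI
    rw [hxapp s]
    by_cases hex : ∃ t ∈ I, St9.wFun lam K (s - t) ≠ 0
    · obtain ⟨t, ht, hwt⟩ := hex
      have hrest : ∀ t' ∈ I, t' ≠ t → y t' * St9.wFun lam K (s - t') = 0 := by
        intro t' ht' hne
        rcases eq_or_ne (St9.wFun lam K (s - t')) 0 with h0 | h0
        · rw [h0, mul_zero]
        · exfalso
          obtain ⟨hd, _⟩ := St9.wFun_ne_zero lam K h0
          obtain ⟨hd2, _⟩ := St9.wFun_ne_zero lam K hwt
          have hdvd : (2 ^ K : ℤ) ∣ (t - t') := by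
            have he : t - t' = (s - t') - (s - t) := by ring
            rw [he]
            exact dvd_sub hd hd2
          have := Int.eq_zero_of_abs_lt_dvd hdvd (hdiam t ht t' ht')
          omega
      rw [Finset.sum_eq_single_of_mem t ht hrest, norm_mul]
      have h1 : ‖St9.wFun lam K (s - t)‖ ≤ ‖lam‖⁻¹ := by
        refine St9.wFun_norm_le_inv h K ?_
        intro h0
        apply hsI
        have : s = t := by omega
        rw [this]; exact ht
      calc ‖y t‖ * ‖St9.wFun lam K (s - t)‖ ≤ (⨆ s : ℤ, ‖y s‖) * ‖lam‖⁻¹ :=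
            mul_le_mul (hyle t) h1 (norm_nonneg _) hSup0
        _ = ‖lam‖⁻¹ * (⨆ s : ℤ, ‖y s‖) := mul_comm _ _
    · push_neg at hex
      rw [Finset.sum_eq_zero fun t ht => by rw [hex t ht, mul_zero], norm_zero]
      exact mul_nonneg (by positivity) hSup0
end
end

section
/- Let ε > 0 and r > 0. Suppose a ∈ ℓ₁(ℤ) and (a^{(n)})_{n∈ℕ} is a sequence in ℓ₁(ℤ) such that ‖a^{(n)}‖₁ ≤ r for all n, ∑_{k∈ℤ} x(k)a^{(n)}(k) → ∑_{k∈ℤ} x(k)a(k) as n → ∞ for every x ∈ F^{(λ)}, and ‖a^{(n)} − a‖₁ ≥ ε/3 for all n. Then ‖a‖₁ ≤ r − (ε/3)·(1 − |λ|⁻¹)/(1 + |λ|⁻¹). -/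
open scoped ENNReal
open Filter Topology

noncomputable section

namespace Stmt11Aux

/-- binary digit sum on ℕ -/
def ds (s : ℕ) : ℕ := (Nat.digits 2 s).sum

lemma ds_two_mul (k : ℕ) : ds (2 * k) = ds k := by
  rcases Nat.eq_zero_or_pos k with rfl | hk
  · rfl
  · unfold ds
    rw [Nat.digits_def' (by norm_num : (1:ℕ) < 2) (by omega)]
    have h1 : 2 * k % 2 = 0 := by omega
    have h2 : 2 * k / 2 = k := by omega
    rw [h1, h2]
    simp

lemma ds_two_mul_add_one (k : ℕ) : ds (2 * k + 1) = ds k + 1 := by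
  unfold ds
  rw [Nat.digits_def' (by norm_num : (1:ℕ) < 2) (by omega)]
  have h1 : (2 * k + 1) % 2 = 1 := by omega
  have h2 : (2 * k + 1) / 2 = k := by omega
  rw [h1, h2]
  simp [Nat.add_comm]

lemma one_le_ds : ∀ s : ℕ, s ≠ 0 → 1 ≤ ds s := by
  intro s
  induction s using Nat.strong_induction_on with
  | _ s ih =>
    intro hs
    rcases Nat.even_or_odd s with ⟨k, hk⟩ | ⟨k, hk⟩
    · have hk' : s = 2 * k := by omega
      subst hk'
      rw [ds_two_mul]
      exact ih k (by omega) (by omega)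
    · subst hk
      rw [ds_two_mul_add_one]
      omega

variable (lam : ℂ)

/-- the weight `λ^{-b(s)}` -/
def wgt (s : ℕ) : ℂ := lam⁻¹ ^ ds s

/-- suffix functional: pairing of `σ^j x₀` with `y`. -/
def RR (j : ℤ) (y : ℤ → ℂ) : ℂ := ∑' s : ℕ, wgt lam s * y (j + (s : ℤ))

lemma norm_wgt (s : ℕ) : ‖wgt lam s‖ = ‖lam‖⁻¹ ^ ds s := by
  rw [wgt, norm_pow, norm_inv]

lemma wgt_zero : wgt lam 0 = 1 := by
  simp [wgt, ds]

lemma wgt_two_mul (σ : ℕ) : wgt lam (2 * σ) = wgt lam σ := by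
  simp [wgt, ds_two_mul]

lemma wgt_two_mul_add_one (σ : ℕ) : wgt lam (2 * σ + 1) = lam⁻¹ * wgt lam σ := by
  rw [wgt, wgt, ds_two_mul_add_one, pow_succ, mul_comm]

section withh
variable (hlam : 1 < ‖lam‖)

lemma q_nonneg : (0:ℝ) ≤ ‖lam‖⁻¹ := inv_nonneg.2 (norm_nonneg _)

lemma q_lt_one (hlam : 1 < ‖lam‖) : ‖lam‖⁻¹ < 1 :=
  inv_lt_one_of_one_lt₀ hlam

lemma norm_wgt_le_one (hlam : 1 < ‖lam‖) (s : ℕ) : ‖wgt lam s‖ ≤ 1 := by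
  rw [norm_wgt]
  exact pow_le_one₀ (q_nonneg lam) (q_lt_one lam hlam).le

lemma norm_wgt_le_q (hlam : 1 < ‖lam‖) {s : ℕ} (hs : s ≠ 0) : ‖wgt lam s‖ ≤ ‖lam‖⁻¹ := by
  rw [norm_wgt]
  calc ‖lam‖⁻¹ ^ ds s ≤ ‖lam‖⁻¹ ^ 1 :=
        pow_le_pow_of_le_one (q_nonneg lam) (q_lt_one lam hlam).le (one_le_ds s hs)
    _ = ‖lam‖⁻¹ := pow_one _

end withh

section summ

variable {y : ℤ → ℂ}

lemma inj_shift (j : ℤ) : Function.Injective (fun s : ℕ => j + (s : ℤ)) := by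
  intro s t hst
  simp only [add_right_inj, Nat.cast_inj] at hst
  exact hst

lemma summable_shift (hy : Summable fun k : ℤ => ‖y k‖) (j : ℤ) :
    Summable fun s : ℕ => ‖y (j + (s:ℤ))‖ :=
  hy.comp_injective (inj_shift j)

lemma summable_RR (hlam : 1 < ‖lam‖) (hy : Summable fun k : ℤ => ‖y k‖) (j : ℤ) :
    Summable fun s : ℕ => wgt lam s * y (j + (s:ℤ)) := by
  refine Summable.of_norm_bounded (summable_shift hy j) (fun s => ?_)
  rw [norm_mul]
  exact mul_le_of_le_one_left (norm_nonneg _) (norm_wgt_le_one lam hlam s)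

/-- shifting into ℤ only decreases a nonnegative sum -/
lemma tsum_shift_le {g : ℤ → ℝ} (hg : Summable g) (hg0 : ∀ k, 0 ≤ g k) (j : ℤ) :
    (∑' s : ℕ, g (j + (s:ℤ))) ≤ ∑' k : ℤ, g k := by
  classical
  set i : ℕ → ℤ := fun s => j + (s:ℤ) with hi_def
  have hi : Function.Injective i := inj_shift j
  set G : ℤ → ℝ := fun k => if k ∈ Set.range i then g k else 0 with hG_def
  have hGle : ∀ k, G k ≤ g k := by
    intro k
    show (if k ∈ Set.range i then g k else 0) ≤ g k
    split_ifs
    · exact le_rfl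
    · exact hg0 k
  have hG0 : ∀ k, 0 ≤ G k := by
    intro k
    show (0:ℝ) ≤ if k ∈ Set.range i then g k else 0
    split_ifs
    · exact hg0 k
    · exact le_rfl
  have hGsum : Summable G := Summable.of_nonneg_of_le hG0 hGle hg
  have h1 : ∀ s : ℕ, G (i s) = g (i s) := fun s => if_pos ⟨s, rfl⟩
  have h2 : (∑' s : ℕ, G (i s)) = ∑' k : ℤ, G k := by
    refine hi.tsum_eq ?_
    intro k hk
    by_contra hnot
    exact hk (if_neg hnot)
  calc (∑' s : ℕ, g (j + (s:ℤ))) = ∑' s : ℕ, G (i s) := by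
        exact (tsum_congr (fun s => (h1 s))).symm
    _ = ∑' k : ℤ, G k := h2
    _ ≤ ∑' k : ℤ, g k := Summable.tsum_le_tsum hGle hGsum hg

lemma summable_norm_RR (hlam : 1 < ‖lam‖) (hy : Summable fun k : ℤ => ‖y k‖) (j : ℤ) :
    Summable fun s : ℕ => ‖wgt lam s * y (j + (s:ℤ))‖ := by
  refine Summable.of_nonneg_of_le (fun s => norm_nonneg _) (fun s => ?_) (summable_shift hy j)
  rw [norm_mul]
  exact mul_le_of_le_one_left (norm_nonneg _) (norm_wgt_le_one lam hlam s)

lemma norm_RR_le (hlam : 1 < ‖lam‖) (hy : Summable fun k : ℤ => ‖y k‖) (j : ℤ) :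
    ‖RR lam j y‖ ≤ ∑' k : ℤ, ‖y k‖ := by
  calc ‖RR lam j y‖ ≤ ∑' s : ℕ, ‖wgt lam s * y (j + (s:ℤ))‖ :=
        norm_tsum_le_tsum_norm (summable_norm_RR lam hlam hy j)
    _ ≤ ∑' s : ℕ, ‖y (j + (s:ℤ))‖ := by
        refine Summable.tsum_le_tsum (fun s => ?_) (summable_norm_RR lam hlam hy j) (summable_shift hy j)
        rw [norm_mul]
        exact mul_le_of_le_one_left (norm_nonneg _) (norm_wgt_le_one lam hlam s)
    _ ≤ ∑' k : ℤ, ‖y k‖ := tsum_shift_le hy (fun k => norm_nonneg _) j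

end summ

end Stmt11Aux

namespace Stmt11Aux

section parity

variable (lam : ℂ) {y : ℤ → ℂ}

lemma inj_two_mul : Function.Injective (fun i : ℤ => 2 * i) := by
  intro a b hab
  simpa using hab

lemma inj_two_mul_add_one : Function.Injective (fun i : ℤ => 2 * i + 1) := by
  intro a b hab
  simp only [add_left_inj] at hab
  simpa using hab

lemma summable_even (hy : Summable fun k : ℤ => ‖y k‖) :
    Summable fun i : ℤ => ‖y (2 * i)‖ :=
  hy.comp_injective inj_two_mul

lemma summable_odd (hy : Summable fun k : ℤ => ‖y k‖) :
    Summable fun i : ℤ => ‖y (2 * i + 1)‖ :=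
  hy.comp_injective inj_two_mul_add_one

lemma RR_even (hlam : 1 < ‖lam‖) (hy : Summable fun k : ℤ => ‖y k‖) (i : ℤ) :
    RR lam (2 * i) y
      = RR lam i (fun v => y (2 * v)) + lam⁻¹ * RR lam i (fun v => y (2 * v + 1)) := by
  have he : Summable fun σ : ℕ => wgt lam σ * y (2 * (i + (σ:ℤ))) :=
    summable_RR lam hlam (summable_even hy) i
  have ho : Summable fun σ : ℕ => wgt lam σ * y (2 * (i + (σ:ℤ)) + 1) :=
    summable_RR lam hlam (summable_odd hy) i
  have he' : Summable fun σ : ℕ => wgt lam (2 * σ) * y (2 * i + ((2 * σ : ℕ) : ℤ)) := by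
    refine he.congr (fun σ => ?_)
    rw [wgt_two_mul]
    congr 2
    push_cast
    ring
  have ho' : Summable fun σ : ℕ => wgt lam (2 * σ + 1) * y (2 * i + ((2 * σ + 1 : ℕ) : ℤ)) := by
    refine (ho.mul_left lam⁻¹).congr (fun σ => ?_)
    rw [wgt_two_mul_add_one, mul_assoc]
    congr 3
    push_cast
    ring
  have hsplit := tsum_even_add_odd
    (f := fun s : ℕ => wgt lam s * y (2 * i + (s:ℤ))) he' ho'
  rw [RR, RR, RR, ← hsplit]
  congr 1
  · refine tsum_congr (fun σ => ?_)
    beta_reduce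
    rw [wgt_two_mul]
    congr 2
    push_cast
    ring
  · rw [← tsum_mul_left]
    refine tsum_congr (fun σ => ?_)
    beta_reduce
    rw [wgt_two_mul_add_one, mul_assoc]
    congr 3
    push_cast
    ring

lemma RR_odd (hlam : 1 < ‖lam‖) (hy : Summable fun k : ℤ => ‖y k‖) (i : ℤ) :
    RR lam (2 * i + 1) y
      = RR lam i (fun v => y (2 * v + 1)) + lam⁻¹ * RR lam (i + 1) (fun v => y (2 * v)) := by
  have ho : Summable fun σ : ℕ => wgt lam σ * y (2 * (i + (σ:ℤ)) + 1) :=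
    summable_RR lam hlam (summable_odd hy) i
  have he : Summable fun σ : ℕ => wgt lam σ * y (2 * (i + 1 + (σ:ℤ))) :=
    summable_RR lam hlam (summable_even hy) (i + 1)
  have ho' : Summable fun σ : ℕ => wgt lam (2 * σ) * y (2 * i + 1 + ((2 * σ : ℕ) : ℤ)) := by
    refine ho.congr (fun σ => ?_)
    rw [wgt_two_mul]
    congr 2
    push_cast
    ring
  have he' : Summable fun σ : ℕ => wgt lam (2 * σ + 1) * y (2 * i + 1 + ((2 * σ + 1 : ℕ) : ℤ)) := by
    refine (he.mul_left lam⁻¹).congr (fun σ => ?_)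
    rw [wgt_two_mul_add_one, mul_assoc]
    congr 3
    push_cast
    ring
  have hsplit := tsum_even_add_odd
    (f := fun s : ℕ => wgt lam s * y (2 * i + 1 + (s:ℤ))) ho' he'
  rw [RR, RR, RR, ← hsplit]
  congr 1
  · refine tsum_congr (fun σ => ?_)
    beta_reduce
    rw [wgt_two_mul]
    congr 2
    push_cast
    ring
  · rw [← tsum_mul_left]
    refine tsum_congr (fun σ => ?_)
    beta_reduce
    rw [wgt_two_mul_add_one, mul_assoc]
    congr 3
    push_cast
    ring

end parity

end Stmt11Aux

namespace Stmt11Aux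

section step

variable (lam : ℂ) {y : ℤ → ℂ}

lemma RR_even_rec (hlam : 1 < ‖lam‖) (hy : Summable fun k : ℤ => ‖y k‖) (i : ℤ) :
    RR lam i (fun v => y (2 * v))
      = lam⁻¹ ^ 2 * RR lam (i + 1) (fun v => y (2 * v))
        + RR lam (2 * i) y - lam⁻¹ * RR lam (2 * i + 1) y := by
  rw [RR_even lam hlam hy i, RR_odd lam hlam hy i]
  ring

lemma norm_RR_even_step (hlam : 1 < ‖lam‖) (hy : Summable fun k : ℤ => ‖y k‖) (i : ℤ) :
    ‖RR lam i (fun v => y (2 * v))‖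
      ≤ ‖lam‖⁻¹ ^ 2 * ‖RR lam (i + 1) (fun v => y (2 * v))‖
        + (‖RR lam (2 * i) y‖ + ‖lam‖⁻¹ * ‖RR lam (2 * i + 1) y‖) := by
  rw [RR_even_rec lam hlam hy i]
  calc ‖lam⁻¹ ^ 2 * RR lam (i + 1) (fun v => y (2 * v)) + RR lam (2 * i) y
          - lam⁻¹ * RR lam (2 * i + 1) y‖
      ≤ ‖lam⁻¹ ^ 2 * RR lam (i + 1) (fun v => y (2 * v)) + RR lam (2 * i) y‖
          + ‖lam⁻¹ * RR lam (2 * i + 1) y‖ := norm_sub_le _ _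
    _ ≤ ‖lam⁻¹ ^ 2 * RR lam (i + 1) (fun v => y (2 * v))‖ + ‖RR lam (2 * i) y‖
          + ‖lam⁻¹ * RR lam (2 * i + 1) y‖ := by
        have := norm_add_le (lam⁻¹ ^ 2 * RR lam (i + 1) (fun v => y (2 * v))) (RR lam (2 * i) y)
        linarith
    _ = ‖lam‖⁻¹ ^ 2 * ‖RR lam (i + 1) (fun v => y (2 * v))‖
          + (‖RR lam (2 * i) y‖ + ‖lam‖⁻¹ * ‖RR lam (2 * i + 1) y‖) := by
        rw [norm_mul, norm_mul, norm_pow, norm_inv]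
        ring

/-- total over evens plus total over odds equals the total. -/
lemma tot_parity (hy : Summable fun k : ℤ => ‖y k‖) :
    (∑' i : ℤ, ‖y (2 * i)‖) + (∑' i : ℤ, ‖y (2 * i + 1)‖) = ∑' k : ℤ, ‖y k‖ := by
  classical
  have hcomp : (Set.range (fun i : ℤ => 2 * i))ᶜ = Set.range (fun i : ℤ => 2 * i + 1) := by
    ext k
    simp only [Set.mem_compl_iff, Set.mem_range, not_exists]
    constructor
    · intro hk
      rcases Int.even_or_odd k with ⟨m, hm⟩ | ⟨m, hm⟩
      · exact absurd (by omega : 2 * m = k) (hk m)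
      · exact ⟨m, by omega⟩
    · rintro ⟨m, rfl⟩ i hi
      omega
  have h1 : ∑' (x : Set.range (fun i : ℤ => 2 * i)), ‖y x‖ = ∑' i : ℤ, ‖y (2 * i)‖ :=
    tsum_range (fun k : ℤ => ‖y k‖) inj_two_mul
  have h2 : ∑' (x : Set.range (fun i : ℤ => 2 * i + 1)), ‖y x‖ = ∑' i : ℤ, ‖y (2 * i + 1)‖ :=
    tsum_range (fun k : ℤ => ‖y k‖) inj_two_mul_add_one
  have h3 := Summable.tsum_add_tsum_compl (s := Set.range (fun i : ℤ => 2 * i))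
    (hy.subtype _) (hy.subtype _)
  rw [hcomp] at h3
  rw [h1, h2] at h3
  exact h3

lemma tot_even_le (hy : Summable fun k : ℤ => ‖y k‖) :
    (∑' i : ℤ, ‖y (2 * i)‖) ≤ ∑' k : ℤ, ‖y k‖ := by
  have := tot_parity hy
  have h0 : 0 ≤ ∑' i : ℤ, ‖y (2 * i + 1)‖ := tsum_nonneg (fun _ => norm_nonneg _)
  linarith

lemma tot_odd_le (hy : Summable fun k : ℤ => ‖y k‖) :
    (∑' i : ℤ, ‖y (2 * i + 1)‖) ≤ ∑' k : ℤ, ‖y k‖ := by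
  have := tot_parity hy
  have h0 : 0 ≤ ∑' i : ℤ, ‖y (2 * i)‖ := tsum_nonneg (fun _ => norm_nonneg _)
  linarith

/-- iterated bound on the halved suffix functionals. -/
lemma RR_even_iter (hlam : 1 < ‖lam‖) (hy : Summable fun k : ℤ => ‖y k‖)
    {B : ℝ} (hB : (∑' k : ℤ, ‖y k‖) ≤ B) :
    ∀ (m : ℕ) (i : ℤ),
      ‖RR lam i (fun v => y (2 * v))‖
        ≤ ‖lam‖⁻¹ ^ (2 * m) * B
          + ∑ k ∈ Finset.range m, ‖lam‖⁻¹ ^ (2 * k)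
              * (‖RR lam (2 * (i + k)) y‖ + ‖lam‖⁻¹ * ‖RR lam (2 * (i + k) + 1) y‖) := by
  intro m
  induction m with
  | zero =>
    intro i
    simp only [Nat.mul_zero, pow_zero, one_mul, Finset.range_zero, Finset.sum_empty, add_zero]
    calc ‖RR lam i (fun v => y (2 * v))‖ ≤ ∑' v : ℤ, ‖y (2 * v)‖ :=
          norm_RR_le lam hlam (summable_even hy) i
      _ ≤ ∑' k : ℤ, ‖y k‖ := tot_even_le hy
      _ ≤ B := hB
  | succ m ih =>
    intro i
    have hq0 : (0:ℝ) ≤ ‖lam‖⁻¹ := q_nonneg lam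
    have step := norm_RR_even_step lam hlam hy i
    have ihs := ih (i + 1)
    have hmul : ‖lam‖⁻¹ ^ 2 * ‖RR lam (i + 1) (fun v => y (2 * v))‖
        ≤ ‖lam‖⁻¹ ^ 2 * (‖lam‖⁻¹ ^ (2 * m) * B
          + ∑ k ∈ Finset.range m, ‖lam‖⁻¹ ^ (2 * k)
              * (‖RR lam (2 * (i + 1 + k)) y‖ + ‖lam‖⁻¹ * ‖RR lam (2 * (i + 1 + k) + 1) y‖)) :=
      mul_le_mul_of_nonneg_left ihs (by positivity)
    have hsum : ‖lam‖⁻¹ ^ 2 * (‖lam‖⁻¹ ^ (2 * m) * B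
          + ∑ k ∈ Finset.range m, ‖lam‖⁻¹ ^ (2 * k)
              * (‖RR lam (2 * (i + 1 + k)) y‖ + ‖lam‖⁻¹ * ‖RR lam (2 * (i + 1 + k) + 1) y‖))
          + (‖RR lam (2 * i) y‖ + ‖lam‖⁻¹ * ‖RR lam (2 * i + 1) y‖)
        = ‖lam‖⁻¹ ^ (2 * (m + 1)) * B
          + ∑ k ∈ Finset.range (m + 1), ‖lam‖⁻¹ ^ (2 * k)
              * (‖RR lam (2 * (i + k)) y‖ + ‖lam‖⁻¹ * ‖RR lam (2 * (i + k) + 1) y‖) := by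
      rw [Finset.sum_range_succ']
      simp only [Nat.cast_add, Nat.cast_one, Nat.cast_zero, add_zero]
      rw [mul_add, Finset.mul_sum]
      have hpow : ∀ k : ℕ, ‖lam‖⁻¹ ^ 2 * ‖lam‖⁻¹ ^ (2 * k) = ‖lam‖⁻¹ ^ (2 * (k + 1)) := by
        intro k
        rw [← pow_add]
        congr 1
        ring
      have hterm : ∀ k : ℕ,
          ‖lam‖⁻¹ ^ 2 * (‖lam‖⁻¹ ^ (2 * k)
              * (‖RR lam (2 * (i + 1 + k)) y‖ + ‖lam‖⁻¹ * ‖RR lam (2 * (i + 1 + k) + 1) y‖))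
            = ‖lam‖⁻¹ ^ (2 * (k + 1))
              * (‖RR lam (2 * (i + (k + 1))) y‖ + ‖lam‖⁻¹ * ‖RR lam (2 * (i + (k + 1)) + 1) y‖) := by
        intro k
        rw [← mul_assoc, hpow k]
        congr 3 <;> ring_nf
      rw [Finset.sum_congr rfl (fun k _ => hterm k)]
      have h20 : ‖lam‖⁻¹ ^ 2 * (‖lam‖⁻¹ ^ (2 * m) * B) = ‖lam‖⁻¹ ^ (2 * (m + 1)) * B := by
        rw [← mul_assoc, hpow m]
      rw [h20]
      simp only [Nat.mul_zero, pow_zero, one_mul]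
      ring
    linarith

end step

end Stmt11Aux

namespace Stmt11Aux

section basebound

variable (lam : ℂ) {y : ℤ → ℂ}

lemma RR_split (hlam : 1 < ‖lam‖) (hy : Summable fun k : ℤ => ‖y k‖) (j : ℤ) :
    RR lam j y = y j + ∑' s : ℕ, wgt lam (s + 1) * y (j + 1 + (s:ℤ)) := by
  rw [RR, Summable.tsum_eq_zero_add (summable_RR lam hlam hy j)]
  congr 1
  · rw [wgt_zero]
    simp
  · refine tsum_congr (fun s => ?_)
    congr 2
    push_cast
    ring

lemma base_bound (hlam : 1 < ‖lam‖) (hy : Summable fun k : ℤ => ‖y k‖) (j : ℤ) :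
    ‖y j‖ ≤ ‖RR lam j y‖ + ‖lam‖⁻¹ * ((∑' k : ℤ, ‖y k‖) - ‖y j‖) := by
  classical
  have hsplit := RR_split lam hlam hy j
  set T : ℂ := ∑' s : ℕ, wgt lam (s + 1) * y (j + 1 + (s:ℤ)) with hT
  have hyj : y j = RR lam j y - T := by rw [hsplit]; ring
  -- summability of the tail pieces
  have hsum1 : Summable fun s : ℕ => ‖y (j + 1 + (s:ℤ))‖ := summable_shift hy (j + 1)
  have hsum2 : Summable fun s : ℕ => ‖wgt lam (s + 1) * y (j + 1 + (s:ℤ))‖ := by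
    refine Summable.of_nonneg_of_le (fun s => norm_nonneg _) (fun s => ?_) hsum1
    rw [norm_mul]
    exact mul_le_of_le_one_left (norm_nonneg _) (norm_wgt_le_one lam hlam _)
  have hTle : ‖T‖ ≤ ‖lam‖⁻¹ * ((∑' k : ℤ, ‖y k‖) - ‖y j‖) := by
    have h1 : ‖T‖ ≤ ∑' s : ℕ, ‖wgt lam (s + 1) * y (j + 1 + (s:ℤ))‖ :=
      norm_tsum_le_tsum_norm hsum2
    have h2 : (∑' s : ℕ, ‖wgt lam (s + 1) * y (j + 1 + (s:ℤ))‖)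
        ≤ ∑' s : ℕ, ‖lam‖⁻¹ * ‖y (j + 1 + (s:ℤ))‖ := by
      refine Summable.tsum_le_tsum (fun s => ?_) hsum2 (hsum1.mul_left _)
      rw [norm_mul]
      exact mul_le_mul_of_nonneg_right (norm_wgt_le_q lam hlam (Nat.succ_ne_zero s)) (norm_nonneg _)
    have h3 : (∑' s : ℕ, ‖lam‖⁻¹ * ‖y (j + 1 + (s:ℤ))‖)
        = ‖lam‖⁻¹ * ∑' s : ℕ, ‖y (j + 1 + (s:ℤ))‖ := tsum_mul_left
    -- the shifted tail avoids j
    set g : ℤ → ℝ := fun k => if k = j then 0 else ‖y k‖ with hg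
    have hgsum : Summable g := by
      refine Summable.of_nonneg_of_le (fun k => ?_) (fun k => ?_) hy
      · show (0:ℝ) ≤ if k = j then 0 else ‖y k‖
        split_ifs
        · exact le_rfl
        · exact norm_nonneg _
      · show (if k = j then 0 else ‖y k‖) ≤ ‖y k‖
        split_ifs
        · exact norm_nonneg _
        · exact le_rfl
    have h4 : (∑' s : ℕ, ‖y (j + 1 + (s:ℤ))‖) = ∑' s : ℕ, g (j + 1 + (s:ℤ)) := by
      refine tsum_congr (fun s => ?_)
      have : j + 1 + (s:ℤ) ≠ j := by omega
      simp [hg, this]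
    have h5 : (∑' s : ℕ, g (j + 1 + (s:ℤ))) ≤ ∑' k : ℤ, g k := by
      refine tsum_shift_le hgsum (fun k => ?_) (j + 1)
      show (0:ℝ) ≤ if k = j then 0 else ‖y k‖
      split_ifs
      · exact le_rfl
      · exact norm_nonneg _
    have h6 : (∑' k : ℤ, ‖y k‖) = ‖y j‖ + ∑' k : ℤ, g k := by
      simpa [hg] using Summable.tsum_eq_add_tsum_ite hy j
    have h7 : (∑' s : ℕ, ‖y (j + 1 + (s:ℤ))‖) ≤ (∑' k : ℤ, ‖y k‖) - ‖y j‖ := by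
      rw [h4]
      linarith
    calc ‖T‖ ≤ ∑' s : ℕ, ‖wgt lam (s + 1) * y (j + 1 + (s:ℤ))‖ := h1
      _ ≤ ∑' s : ℕ, ‖lam‖⁻¹ * ‖y (j + 1 + (s:ℤ))‖ := h2
      _ = ‖lam‖⁻¹ * ∑' s : ℕ, ‖y (j + 1 + (s:ℤ))‖ := h3
      _ ≤ ‖lam‖⁻¹ * ((∑' k : ℤ, ‖y k‖) - ‖y j‖) :=
          mul_le_mul_of_nonneg_left h7 (q_nonneg lam)
  calc ‖y j‖ = ‖RR lam j y - T‖ := by rw [← hyj]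
    _ ≤ ‖RR lam j y‖ + ‖T‖ := norm_sub_le _ _
    _ ≤ ‖RR lam j y‖ + ‖lam‖⁻¹ * ((∑' k : ℤ, ‖y k‖) - ‖y j‖) := by linarith

end basebound

end Stmt11Aux

namespace Stmt11Aux

section seq

variable (lam : ℂ)

lemma tendsto_RR_even_seq (hlam : 1 < ‖lam‖) (D : ℕ → ℤ → ℂ)
    (hS : ∀ n, Summable fun k : ℤ => ‖D n k‖) {B : ℝ}
    (hB : ∀ n, (∑' k : ℤ, ‖D n k‖) ≤ B)
    (hR : ∀ j : ℤ, Tendsto (fun n => RR lam j (D n)) atTop (𝓝 0)) (i : ℤ) :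
    Tendsto (fun n => RR lam i (fun v => D n (2 * v))) atTop (𝓝 0) := by
  have hq0 : (0:ℝ) ≤ ‖lam‖⁻¹ := q_nonneg lam
  have hq1 : ‖lam‖⁻¹ < 1 := q_lt_one lam hlam
  have hB0 : 0 ≤ B := le_trans (tsum_nonneg (fun k => norm_nonneg _)) (hB 0)
  rw [NormedAddCommGroup.tendsto_nhds_zero]
  intro ε hε
  obtain ⟨m, hm⟩ : ∃ m : ℕ, ‖lam‖⁻¹ ^ (2 * m) * B < ε / 2 := by
    have h := (tendsto_pow_atTop_nhds_zero_of_lt_one hq0 hq1).mul_const B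
    rw [zero_mul] at h
    have h2 := h.eventually (gt_mem_nhds (by positivity : (0:ℝ) < ε / 2))
    obtain ⟨m0, hm0⟩ := h2.exists
    refine ⟨m0, lt_of_le_of_lt ?_ hm0⟩
    exact mul_le_mul_of_nonneg_right
      (pow_le_pow_of_le_one hq0 hq1.le (by omega)) hB0
  set g : ℕ → ℝ := fun n => ∑ k ∈ Finset.range m, ‖lam‖⁻¹ ^ (2 * k)
      * (‖RR lam (2 * (i + (k:ℤ))) (D n)‖ + ‖lam‖⁻¹ * ‖RR lam (2 * (i + (k:ℤ)) + 1) (D n)‖)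
    with hgdef
  have hg : Tendsto g atTop (𝓝 0) := by
    have hterm : ∀ k ∈ Finset.range m, Tendsto (fun n => ‖lam‖⁻¹ ^ (2 * k)
        * (‖RR lam (2 * (i + (k:ℤ))) (D n)‖ + ‖lam‖⁻¹ * ‖RR lam (2 * (i + (k:ℤ)) + 1) (D n)‖))
        atTop (𝓝 0) := by
      intro k _
      have h1 := (hR (2 * (i + (k:ℤ)))).norm
      have h2 := (hR (2 * (i + (k:ℤ)) + 1)).norm
      rw [norm_zero] at h1 h2
      have h3 := (h1.add (h2.const_mul ‖lam‖⁻¹)).const_mul (‖lam‖⁻¹ ^ (2 * k))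
      simpa using h3
    have := tendsto_finset_sum (Finset.range m) hterm
    simpa [hgdef] using this
  have hgev := hg.eventually (gt_mem_nhds (by positivity : (0:ℝ) < ε / 2))
  filter_upwards [hgev] with n hn
  have hiter := RR_even_iter lam hlam (hS n) (hB n) m i
  calc ‖RR lam i (fun v => D n (2 * v))‖ ≤ ‖lam‖⁻¹ ^ (2 * m) * B + g n := hiter
    _ < ε / 2 + ε / 2 := by
        have : g n < ε / 2 := hn
        linarith
    _ = ε := by ring

lemma tendsto_RR_odd_seq (hlam : 1 < ‖lam‖) (D : ℕ → ℤ → ℂ)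
    (hS : ∀ n, Summable fun k : ℤ => ‖D n k‖) {B : ℝ}
    (hB : ∀ n, (∑' k : ℤ, ‖D n k‖) ≤ B)
    (hR : ∀ j : ℤ, Tendsto (fun n => RR lam j (D n)) atTop (𝓝 0)) (i : ℤ) :
    Tendsto (fun n => RR lam i (fun v => D n (2 * v + 1))) atTop (𝓝 0) := by
  have hlam0 : lam ≠ 0 := by
    intro h0
    rw [h0] at hlam
    simp at hlam
    linarith
  have hid : ∀ n, RR lam i (fun v => D n (2 * v + 1))
      = lam * (RR lam (2 * i) (D n) - RR lam i (fun v => D n (2 * v))) := by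
    intro n
    have h1 := RR_even lam hlam (hS n) i
    rw [h1]
    field_simp
    ring
  have h2 := ((hR (2 * i)).sub (tendsto_RR_even_seq lam hlam D hS hB hR i)).const_mul lam
  have h3 : (fun n => lam * (RR lam (2 * i) (D n) - RR lam i (fun v => D n (2 * v))))
      = fun n => RR lam i (fun v => D n (2 * v + 1)) := by
    funext n
    rw [← hid n]
  rw [h3] at h2
  simpa using h2

end seq

end Stmt11Aux

namespace Stmt11Aux

/-- diameter measure of a finite window -/
def dW (W : Finset ℤ) : ℕ := if h : W.Nonempty then (W.max' h - W.min' h).toNat else 0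

lemma image_div2_diam_le {S W : Finset ℤ} (hS : S ⊆ W) (hSne : S.Nonempty) (hWne : W.Nonempty) :
    dW (S.image (fun k => k / 2)) ≤ dW W := by
  classical
  have hVne : (S.image (fun k => k / 2)).Nonempty := hSne.image _
  rw [dW, dif_pos hVne, dW, dif_pos hWne]
  obtain ⟨a, ha, hae⟩ := Finset.mem_image.1 ((S.image (fun k => k / 2)).max'_mem hVne)
  obtain ⟨b, hb, hbe⟩ := Finset.mem_image.1 ((S.image (fun k => k / 2)).min'_mem hVne)
  have h1 : a ≤ W.max' hWne := Finset.le_max' W a (hS ha)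
  have h2 : W.min' hWne ≤ b := Finset.min'_le W b (hS hb)
  have h3 : W.min' hWne ≤ W.max' hWne := Finset.min'_le W _ (W.max'_mem hWne)
  rw [← hae, ← hbe]
  omega

lemma image_div2_diam_lt {W : Finset ℤ} (hWne : W.Nonempty) (hcard : 1 < W.card)
    (hpar : ∀ x ∈ W, ∀ y ∈ W, x % 2 = y % 2) :
    dW (W.image (fun k => k / 2)) < dW W := by
  classical
  have hVne : (W.image (fun k => k / 2)).Nonempty := hWne.image _
  rw [dW, dif_pos hVne, dW, dif_pos hWne]
  obtain ⟨a, ha, hae⟩ := Finset.mem_image.1 ((W.image (fun k => k / 2)).max'_mem hVne)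
  obtain ⟨b, hb, hbe⟩ := Finset.mem_image.1 ((W.image (fun k => k / 2)).min'_mem hVne)
  have h1 : a ≤ W.max' hWne := Finset.le_max' W a ha
  have h2 : W.min' hWne ≤ b := Finset.min'_le W b hb
  have h4 : W.min' hWne < W.max' hWne := Finset.min'_lt_max'_of_card W hcard
  have h5 := hpar _ (W.max'_mem hWne) _ (W.min'_mem hWne)
  rw [← hae, ← hbe]
  omega

end Stmt11Aux

namespace Stmt11Aux

section window

variable (lam : ℂ)

lemma window_main (hlam : 1 < ‖lam‖) :
    ∀ (N : ℕ) (W : Finset ℤ), W.card + dW W ≤ N →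
    ∀ (D : ℕ → ℤ → ℂ), (∀ n, Summable fun k : ℤ => ‖D n k‖) →
    ∀ B : ℝ, (∀ n, (∑' k : ℤ, ‖D n k‖) ≤ B) →
    (∀ j : ℤ, Tendsto (fun n => RR lam j (D n)) atTop (𝓝 0)) →
    ∀ ε : ℝ, 0 < ε → ∀ᶠ n in atTop,
      (∑ k ∈ W, ‖D n k‖) ≤ ‖lam‖⁻¹ * ((∑' k : ℤ, ‖D n k‖) - ∑ k ∈ W, ‖D n k‖) + ε := by
  intro N
  induction N using Nat.strong_induction_on with
  | _ N ih =>
    intro W hWN D hS B hB hR ε hε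
    by_cases hc0 : W.card = 0
    · have hW : W = ∅ := Finset.card_eq_zero.1 hc0
      subst hW
      refine Filter.Eventually.of_forall (fun n => ?_)
      simp only [Finset.sum_empty, sub_zero]
      have h1 : 0 ≤ ∑' k : ℤ, ‖D n k‖ := tsum_nonneg fun k => norm_nonneg _
      have h2 := mul_nonneg (q_nonneg lam) h1
      linarith
    by_cases hc1 : W.card = 1
    · obtain ⟨k, hk⟩ := Finset.card_eq_one.1 hc1
      subst hk
      have hten := (NormedAddCommGroup.tendsto_nhds_zero.1 (hR k)) ε hε
      filter_upwards [hten] with n hn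
      rw [Finset.sum_singleton]
      have hbb := base_bound lam hlam (hS n) k
      linarith
    -- now 2 ≤ W.card
    have hcard : 2 ≤ W.card := by omega
    classical
    have hWne : W.Nonempty := Finset.card_pos.1 (by omega)
    set W0 := W.filter (fun k => k % 2 = 0) with hW0
    set W1 := W.filter (fun k => ¬ (k % 2 = 0)) with hW1
    set V0 := W0.image (fun k => k / 2) with hV0
    set V1 := W1.image (fun k => k / 2) with hV1
    have hinj0 : ∀ x ∈ W0, ∀ y ∈ W0, x / 2 = y / 2 → x = y := by
      intro x hx y hy hxy
      have hx2 := (Finset.mem_filter.1 hx).2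
      have hy2 := (Finset.mem_filter.1 hy).2
      omega
    have hinj1 : ∀ x ∈ W1, ∀ y ∈ W1, x / 2 = y / 2 → x = y := by
      intro x hx y hy hxy
      have hx2 := (Finset.mem_filter.1 hx).2
      have hy2 := (Finset.mem_filter.1 hy).2
      omega
    have hsum0 : ∀ n, (∑ v ∈ V0, ‖D n (2 * v)‖) = ∑ k ∈ W0, ‖D n k‖ := by
      intro n
      rw [hV0, Finset.sum_image hinj0]
      refine Finset.sum_congr rfl (fun k hk => ?_)
      have hk2 := (Finset.mem_filter.1 hk).2
      have h2k : 2 * (k / 2) = k := by omega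
      rw [h2k]
    have hsum1 : ∀ n, (∑ v ∈ V1, ‖D n (2 * v + 1)‖) = ∑ k ∈ W1, ‖D n k‖ := by
      intro n
      rw [hV1, Finset.sum_image hinj1]
      refine Finset.sum_congr rfl (fun k hk => ?_)
      have hk2 := (Finset.mem_filter.1 hk).2
      have h2k : 2 * (k / 2) + 1 = k := by omega
      rw [h2k]
    have hsplitW : ∀ n, (∑ k ∈ W0, ‖D n k‖) + (∑ k ∈ W1, ‖D n k‖) = ∑ k ∈ W, ‖D n k‖ := by
      intro n
      rw [hW0, hW1]
      exact Finset.sum_filter_add_sum_filter_not W _ _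
    have hcardsplit : W0.card + W1.card = W.card := by
      rw [hW0, hW1]
      exact Finset.card_filter_add_card_filter_not _
    have hcard0 : V0.card = W0.card :=
      Finset.card_image_of_injOn (fun x hx y hy => hinj0 x hx y hy)
    have hcard1 : V1.card = W1.card :=
      Finset.card_image_of_injOn (fun x hx y hy => hinj1 x hx y hy)
    have hSe : ∀ n, Summable fun v : ℤ => ‖D n (2 * v)‖ := fun n => summable_even (hS n)
    have hSo : ∀ n, Summable fun v : ℤ => ‖D n (2 * v + 1)‖ := fun n => summable_odd (hS n)
    have hBe : ∀ n, (∑' v : ℤ, ‖D n (2 * v)‖) ≤ B := fun n => le_trans (tot_even_le (hS n)) (hB n)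
    have hBo : ∀ n, (∑' v : ℤ, ‖D n (2 * v + 1)‖) ≤ B :=
      fun n => le_trans (tot_odd_le (hS n)) (hB n)
    have hRe := tendsto_RR_even_seq lam hlam D hS hB hR
    have hRo := tendsto_RR_odd_seq lam hlam D hS hB hR
    by_cases h0 : W0.Nonempty
    · by_cases h1 : W1.Nonempty
      · -- mixed parity case
        have hc0' : V0.card + dW V0 < N := by
          have e2 : dW V0 ≤ dW W := by
            rw [hV0]
            exact image_div2_diam_le (Finset.filter_subset _ _) h0 hWne
          have e3 : 1 ≤ W1.card := Finset.card_pos.2 h1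
          omega
        have hc1' : V1.card + dW V1 < N := by
          have e2 : dW V1 ≤ dW W := by
            rw [hV1]
            exact image_div2_diam_le (Finset.filter_subset _ _) h1 hWne
          have e3 : 1 ≤ W0.card := Finset.card_pos.2 h0
          omega
        have hrec0 := ih _ hc0' V0 le_rfl (fun n v => D n (2 * v)) hSe B hBe hRe
          (ε / 2) (by positivity)
        have hrec1 := ih _ hc1' V1 le_rfl (fun n v => D n (2 * v + 1)) hSo B hBo hRo
          (ε / 2) (by positivity)
        filter_upwards [hrec0, hrec1] with n hn0 hn1
        have htot := tot_parity (hS n)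
        have key0 := hsum0 n
        have key1 := hsum1 n
        have ksplit := hsplitW n
        have m1 : ‖lam‖⁻¹ * ((∑' k : ℤ, ‖D n k‖) - ∑ k ∈ W, ‖D n k‖)
            = ‖lam‖⁻¹ * ((∑' v : ℤ, ‖D n (2 * v)‖) - ∑ v ∈ V0, ‖D n (2 * v)‖)
              + ‖lam‖⁻¹ * ((∑' v : ℤ, ‖D n (2 * v + 1)‖) - ∑ v ∈ V1, ‖D n (2 * v + 1)‖) := by
          rw [key0, key1, ← htot, ← ksplit]
          ring
        linarith
      · -- all elements even
        have hW0W : W0 = W := by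
          rw [hW0]
          refine Finset.filter_true_of_mem (fun k hk => ?_)
          by_contra hodd
          exact h1 ⟨k, Finset.mem_filter.2 ⟨hk, hodd⟩⟩
        have hpar : ∀ x ∈ W, ∀ y ∈ W, x % 2 = y % 2 := by
          intro x hx y hy
          have hx0 : x ∈ W0 := hW0W.symm ▸ hx
          have hy0 : y ∈ W0 := hW0W.symm ▸ hy
          have := (Finset.mem_filter.1 hx0).2
          have := (Finset.mem_filter.1 hy0).2
          omega
        have hlt : dW V0 < dW W := by
          rw [hV0, hW0W]
          exact image_div2_diam_lt hWne (by omega) hpar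
        have hc0' : V0.card + dW V0 < N := by
          rw [hW0W] at hcard0
          omega
        have hrec0 := ih _ hc0' V0 le_rfl (fun n v => D n (2 * v)) hSe B hBe hRe ε hε
        filter_upwards [hrec0] with n hn0
        have key0 := hsum0 n
        rw [hW0W] at key0
        have htotE := tot_even_le (hS n)
        have hmono := mul_le_mul_of_nonneg_left
          (sub_le_sub_right htotE (∑ k ∈ W, ‖D n k‖)) (q_nonneg lam)
        rw [key0] at hn0
        linarith
    · -- all elements odd
      have hW1W : W1 = W := by
        rw [hW1]
        refine Finset.filter_true_of_mem (fun k hk => ?_)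
        by_contra heven
        exact h0 ⟨k, Finset.mem_filter.2 ⟨hk, heven⟩⟩
      have hpar : ∀ x ∈ W, ∀ y ∈ W, x % 2 = y % 2 := by
        intro x hx y hy
        have hx0 : x ∈ W1 := hW1W.symm ▸ hx
        have hy0 : y ∈ W1 := hW1W.symm ▸ hy
        have := (Finset.mem_filter.1 hx0).2
        have := (Finset.mem_filter.1 hy0).2
        omega
      have hlt : dW V1 < dW W := by
        rw [hV1, hW1W]
        exact image_div2_diam_lt hWne (by omega) hpar
      have hc1' : V1.card + dW V1 < N := by
        rw [hW1W] at hcard1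
        omega
      have hrec1 := ih _ hc1' V1 le_rfl (fun n v => D n (2 * v + 1)) hSo B hBo hRo ε hε
      filter_upwards [hrec1] with n hn1
      have key1 := hsum1 n
      rw [hW1W] at key1
      have htotO := tot_odd_le (hS n)
      have hmono := mul_le_mul_of_nonneg_left
        (sub_le_sub_right htotO (∑ k ∈ W, ‖D n k‖)) (q_nonneg lam)
      rw [key1] at hn1
      linarith

end window

end Stmt11Aux

namespace Stmt11Aux

section bridge

variable (lam : ℂ)

lemma norm_x0Fun_le_one (hlam : 1 < ‖lam‖) (m : ℤ) : ‖x0Fun lam m‖ ≤ 1 := by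
  simp only [x0Fun]
  split_ifs
  · rw [norm_pow, norm_inv]
    exact pow_le_one₀ (q_nonneg lam) (q_lt_one lam hlam).le
  · simp

lemma RR_eq_pair (hlam : 1 < ‖lam‖) {y : ℤ → ℂ} (hy : Summable fun k : ℤ => ‖y k‖) (j : ℤ) :
    RR lam j y = ∑' k : ℤ, x0Fun lam (k - j) * y k := by
  classical
  have hinj := inj_shift j
  have hsupp : Function.support (fun k : ℤ => x0Fun lam (k - j) * y k)
      ⊆ Set.range (fun s : ℕ => j + (s:ℤ)) := by
    intro k hk
    by_contra hnot
    apply hk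
    have hneg : ¬ (0 ≤ k - j) := by
      intro hge
      refine hnot ⟨(k - j).toNat, ?_⟩
      show j + ((k - j).toNat : ℤ) = k
      rw [Int.toNat_of_nonneg hge]
      ring
    simp [x0Fun, hneg, show ¬ j ≤ k by omega]
  have hkey := hinj.tsum_eq (f := fun k : ℤ => x0Fun lam (k - j) * y k) hsupp
  rw [← hkey, RR]
  refine tsum_congr (fun s => ?_)
  beta_reduce
  have h1 : j + (s:ℤ) - j = (s:ℤ) := by ring
  rw [h1]
  have h2 : x0Fun lam ((s:ℕ):ℤ) = wgt lam s := by
    simp [x0Fun, binOnes, wgt, ds, Int.toNat_natCast, Int.natCast_nonneg]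
  rw [h2]

/-- `ℓ¹` norms as sums of coordinate norms. -/
lemma ellOne_hasSum_norm (f : ellOne) : HasSum (fun k : ℤ => ‖f k‖) ‖f‖ := by
  have hp : 0 < (1 : ℝ≥0∞).toReal := by norm_num
  have h := lp.hasSum_norm hp f
  simpa [ENNReal.toReal_one, Real.rpow_one] using h

end bridge

end Stmt11Aux

/-- Statement 11.  If `‖a⁽ⁿ⁾‖₁ ≤ r`, `a⁽ⁿ⁾ → a` in the weak* topology induced by `F^{(λ)}`
(i.e. `∑_k x(k) a⁽ⁿ⁾(k) → ∑_k x(k) a(k)` for every `x ∈ F^{(λ)}`), and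
`‖a⁽ⁿ⁾ − a‖₁ ≥ ε/3` for all `n`, then `‖a‖₁ ≤ r − (ε/3)·(1 − |λ|⁻¹)/(1 + |λ|⁻¹)`. -/
theorem statement_11 (lam : ℂ) (h : 1 < ‖lam‖) (ε r : ℝ) (hε : 0 < ε) (hr : 0 < r)
    (a : ellOne) (A : ℕ → ellOne)
    (hbound : ∀ n : ℕ, ‖A n‖ ≤ r)
    (hconv : ∀ x : ellInf, x ∈ Flam lam h →
      Tendsto (fun n : ℕ => ∑' k : ℤ, x k * (A n) k) atTop (𝓝 (∑' k : ℤ, x k * a k)))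
    (hsep : ∀ n : ℕ, ε / 3 ≤ ‖A n - a‖) :
    ‖a‖ ≤ r - ε / 3 * ((1 - ‖lam‖⁻¹) / (1 + ‖lam‖⁻¹)) := by
  classical
  have hq0 : (0:ℝ) ≤ ‖lam‖⁻¹ := Stmt11Aux.q_nonneg lam
  have hq1 : ‖lam‖⁻¹ < 1 := Stmt11Aux.q_lt_one lam h
  have hq1p : (0:ℝ) < 1 + ‖lam‖⁻¹ := by linarith
  set D : ℕ → ℤ → ℂ := fun n k => A n k - a k with hD
  have hDsum : ∀ n, HasSum (fun k : ℤ => ‖D n k‖) ‖A n - a‖ := by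
    intro n
    have h1 := Stmt11Aux.ellOne_hasSum_norm (A n - a)
    have h2 : (fun k : ℤ => ‖(A n - a) k‖) = fun k : ℤ => ‖D n k‖ := by
      funext k
      simp [hD, lp.coeFn_sub, Pi.sub_apply]
    rwa [h2] at h1
  have hS : ∀ n, Summable fun k : ℤ => ‖D n k‖ := fun n => (hDsum n).summable
  have hTot : ∀ n, (∑' k : ℤ, ‖D n k‖) = ‖A n - a‖ := fun n => (hDsum n).tsum_eq
  have haHas := Stmt11Aux.ellOne_hasSum_norm a
  have haSum : Summable fun k : ℤ => ‖a k‖ := haHas.summable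
  have hBd : ∀ n, (∑' k : ℤ, ‖D n k‖) ≤ r + ‖a‖ := by
    intro n
    rw [hTot n]
    have h1 : ‖A n - a‖ ≤ ‖A n‖ + ‖a‖ := norm_sub_le _ _
    have h2 := hbound n
    linarith
  -- the suffix functionals tend to zero along the sequence
  have hR : ∀ j : ℤ, Tendsto (fun n => Stmt11Aux.RR lam j (D n)) atTop (𝓝 0) := by
    intro j
    set x : ellInf := zshift j (x0L lam h) with hx
    have hmem : x ∈ Flam lam h :=
      Submodule.le_topologicalClosure _ (Submodule.subset_span ⟨j, rfl⟩)
    have hxco : ∀ k : ℤ, (x : ℤ → ℂ) k = x0Fun lam (k - j) := fun k => rfl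
    have hxa : Summable fun k : ℤ => x k * a k := by
      refine Summable.of_norm_bounded haSum (fun k => ?_)
      rw [norm_mul, hxco]
      exact mul_le_of_le_one_left (norm_nonneg _) (Stmt11Aux.norm_x0Fun_le_one lam h _)
    have hxA : ∀ n, Summable fun k : ℤ => x k * A n k := by
      intro n
      refine Summable.of_norm_bounded (Stmt11Aux.ellOne_hasSum_norm (A n)).summable
        (fun k => ?_)
      rw [norm_mul, hxco]
      exact mul_le_of_le_one_left (norm_nonneg _) (Stmt11Aux.norm_x0Fun_le_one lam h _)
    have hpair : ∀ n, Stmt11Aux.RR lam j (D n)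
        = (∑' k : ℤ, x k * A n k) - ∑' k : ℤ, x k * a k := by
      intro n
      rw [Stmt11Aux.RR_eq_pair lam h (hS n) j, ← Summable.tsum_sub (hxA n) hxa]
      refine tsum_congr (fun k => ?_)
      rw [← hxco k]
      show x k * (A n k - a k) = x k * A n k - x k * a k
      ring
    have h2 := (hconv x hmem).sub (tendsto_const_nhds (x := ∑' k : ℤ, x k * a k))
    rw [sub_self] at h2
    exact h2.congr (fun n => (hpair n).symm)
  -- conclude via an ε-of-room argument
  apply le_of_forall_pos_le_add
  intro θ hθ
  have hδ : (0:ℝ) < θ / 4 := by positivity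
  -- choose a window capturing almost all of the mass of a
  have hT : Tendsto (fun s : Finset ℤ => ∑ k ∈ s, ‖a k‖) atTop (𝓝 ‖a‖) := haHas
  obtain ⟨W, hWa⟩ := (hT.eventually (lt_mem_nhds (show ‖a‖ - θ/4 < ‖a‖ by linarith))).exists
  -- apply the key window estimate and pick a good n
  have hwin := Stmt11Aux.window_main lam h (W.card + Stmt11Aux.dW W) W le_rfl D hS
    (r + ‖a‖) hBd hR (θ/4) hδ
  obtain ⟨n, hn⟩ := hwin.exists
  -- notation for the various sums
  have hAn := Stmt11Aux.ellOne_hasSum_norm (A n)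
  have hAnS : Summable fun k : ℤ => ‖A n k‖ := hAn.summable
  have cA := Summable.sum_add_tsum_compl (s := W) hAnS
  rw [hAn.tsum_eq] at cA
  have cD := Summable.sum_add_tsum_compl (s := W) (hS n)
  rw [hTot n] at cD
  have ca := Summable.sum_add_tsum_compl (s := W) haSum
  rw [haHas.tsum_eq] at ca
  -- pointwise estimates off the window
  have h5 : (∑' k : ((W : Set ℤ)ᶜ : Set ℤ), (‖D n (k:ℤ)‖ - ‖a (k:ℤ)‖))
      ≤ ∑' k : ((W : Set ℤ)ᶜ : Set ℤ), ‖A n (k:ℤ)‖ := by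
    refine Summable.tsum_le_tsum (fun k => ?_) (((hS n).subtype _).sub (haSum.subtype _))
      (hAnS.subtype _)
    have h51 : ‖D n (k:ℤ)‖ ≤ ‖A n (k:ℤ)‖ + ‖a (k:ℤ)‖ := by
      simp only [hD]
      exact norm_sub_le _ _
    linarith
  have h6 : (∑' k : ((W : Set ℤ)ᶜ : Set ℤ), (‖D n (k:ℤ)‖ - ‖a (k:ℤ)‖))
      = (∑' k : ((W : Set ℤ)ᶜ : Set ℤ), ‖D n (k:ℤ)‖)
        - ∑' k : ((W : Set ℤ)ᶜ : Set ℤ), ‖a (k:ℤ)‖ :=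
    Summable.tsum_sub ((hS n).subtype _) (haSum.subtype _)
  have h7 : (∑ k ∈ W, ‖a k‖) - (∑ k ∈ W, ‖D n k‖) ≤ ∑ k ∈ W, ‖A n k‖ := by
    rw [← Finset.sum_sub_distrib]
    refine Finset.sum_le_sum (fun k hk => ?_)
    have h71 : a k = A n k - D n k := by
      simp [hD]
    have h72 : ‖a k‖ ≤ ‖A n k‖ + ‖D n k‖ := by
      rw [h71]
      exact norm_sub_le _ _
    linarith
  -- main chain
  have hrn := hbound n
  have hAnorm : ‖A n‖ = (∑ k ∈ W, ‖A n k‖) + ∑' k : ((W : Set ℤ)ᶜ : Set ℤ), ‖A n (k:ℤ)‖ :=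
    cA.symm
  have hsepn := hsep n
  rw [hTot n] at hn
  -- abbreviations for linarith
  set U : ℝ := ∑ k ∈ W, ‖D n k‖ with hU
  set T : ℝ := ‖A n - a‖ with hT2
  -- from cD : U + (tsum compl of D) = T
  -- combine everything
  have hTD : (∑' k : ((W : Set ℤ)ᶜ : Set ℤ), ‖D n (k:ℤ)‖) = T - U := by linarith [cD]
  have hTa : (∑' k : ((W : Set ℤ)ᶜ : Set ℤ), ‖a (k:ℤ)‖) = ‖a‖ - ∑ k ∈ W, ‖a k‖ := by
    linarith [ca]
  have hmain : r ≥ ‖a‖ - 2*(θ/4) + T - 2*U := by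
    have e1 : ‖A n‖ ≥ ((∑ k ∈ W, ‖a k‖) - U) + ((T - U) - (‖a‖ - ∑ k ∈ W, ‖a k‖)) := by
      rw [hAnorm]
      have := h5
      rw [h6, hTD, hTa] at this
      linarith [h7]
    linarith
  -- window estimate : U ≤ q (T - U) + θ/4 ; separation : T ≥ ε/3
  have hexp : (T - U) * (1 + ‖lam‖⁻¹) = (T - U) + ‖lam‖⁻¹ * (T - U) := by ring
  have hV : (ε/3 - θ/4) ≤ (T - U) * (1 + ‖lam‖⁻¹) := by
    rw [hexp]
    linarith
  have hTU : (ε/3 - θ/4)/(1 + ‖lam‖⁻¹) ≤ T - U := by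
    rw [div_le_iff₀ hq1p]
    linarith
  have h1q : (0:ℝ) ≤ 1 - ‖lam‖⁻¹ := by linarith
  have hfin1 : (1 - ‖lam‖⁻¹) * ((ε/3 - θ/4)/(1 + ‖lam‖⁻¹)) ≤ (1 - ‖lam‖⁻¹) * (T - U) :=
    mul_le_mul_of_nonneg_left hTU h1q
  have hfin2 : (1 - ‖lam‖⁻¹) * (T - U) = (T - U) - ‖lam‖⁻¹ * (T - U) := by ring
  have hsplit2 : (1 - ‖lam‖⁻¹) * ((ε/3 - θ/4)/(1 + ‖lam‖⁻¹))
      = ε/3 * ((1 - ‖lam‖⁻¹)/(1 + ‖lam‖⁻¹)) - (θ/4) * ((1 - ‖lam‖⁻¹)/(1 + ‖lam‖⁻¹)) := by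
    field_simp
  have hcle : (1 - ‖lam‖⁻¹)/(1 + ‖lam‖⁻¹) ≤ 1 := by
    rw [div_le_one hq1p]
    linarith
  have hcpos : (0:ℝ) ≤ (1 - ‖lam‖⁻¹)/(1 + ‖lam‖⁻¹) := by positivity
  have hdc : (θ/4) * ((1 - ‖lam‖⁻¹)/(1 + ‖lam‖⁻¹)) ≤ θ/4 := by
    calc (θ/4) * ((1 - ‖lam‖⁻¹)/(1 + ‖lam‖⁻¹)) ≤ (θ/4) * 1 :=
          mul_le_mul_of_nonneg_left hcle hδ.le
      _ = θ/4 := mul_one _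
  linarith
end
end
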